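/- arXiv:2507.10168 — 2 statements merged into one kernel-verified Lean document; each statement's English description precedes it below -/
import Mathlib

section
/- Let w = (w_i)_{i ≥ 1} and v = (v_i)_{i ≥ 1} be two distinct reduced infinite words in the generators of R (sequences of generators none of whose finite prefixes contains a forbidden factor). Then the associated characters differ: there exists a constructible right ideal A ∈ J(R) such that exactly one of the two statements '∃ n ≥ 1 with w_1 w_2 ⋯ w_n ∈ A (as an element of R)' and '∃ n ≥ 1 with v_1 v_2 ⋯ v_n ∈ A' holds. -/
open scoped Classical

namespace SgC

variable {M : Type*}

/-- Composition of partial maps (`g` after `f`). -/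
def pcomp (g f : M → Option M) : M → Option M := fun s => (f s).bind g

/-- The canonical partial inverse of a partial map (the genuine inverse when the map
is injective on its domain, as is the case for all maps in the left inverse hull of a
left cancellative monoid). -/
noncomputable def pinv (f : M → Option M) : M → Option M :=
  fun t => if h : ∃ s, f s = some t then some h.choose else none

/-- Left translation `t ↦ s * t` as an everywhere-defined partial map. -/
def ptransl [Mul M] (s : M) : M → Option M := fun t => some (s * t)

/-- The identity partial map. -/
def pid : M → Option M := fun s => some s

/-- The block `q⁻¹ ∘ p`: first multiply on the left by `p`, then remove `q` on the left. -/
noncomputable def pblock [Mul M] (p : M × M) : M → Option M :=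
  pcomp (pinv (ptransl p.2)) (ptransl p.1)

/-- Membership in the left inverse hull `I_ℓ(M)`: `h` is of the form
`s₂ₙ⁻¹ s₂ₙ₋₁ ⋯ s₂⁻¹ s₁` for some `n ≥ 1` and `sᵢ ∈ M` (the list records the pairs
`(s₁,s₂), (s₃,s₄), …`, applied left to right). -/
def InInvHull [Mul M] (h : M → Option M) : Prop :=
  ∃ l : List (M × M), l ≠ [] ∧
    h = l.foldl (fun acc p => pcomp (pblock p) acc) pid

/-- Membership in the inverse hull generated by translations by elements of `σ` only
(used for canonical copies of `I_ℓ(S)` inside partial maps of a larger monoid). -/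
def InInvHullOn [Mul M] (σ : Set M) (h : M → Option M) : Prop :=
  ∃ l : List (M × M), l ≠ [] ∧ (∀ p ∈ l, p.1 ∈ σ ∧ p.2 ∈ σ) ∧
    h = l.foldl (fun acc p => pcomp (pblock p) acc) pid

/-- Domain of a partial map. -/
def pdom (h : M → Option M) : Set M := {s | h s ≠ none}

/-- `h` fixes the set `Y` pointwise (in particular `Y ⊆ dom h`). -/
def PFixes (h : M → Option M) (Y : Set M) : Prop := ∀ s ∈ Y, h s = some s

/-- Preimage of a set under a partial map. -/
def ppre (h : M → Option M) (X : Set M) : Set M := {s | ∃ x ∈ X, h s = some x}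

/-- Constructible right ideals: domains of elements of the left inverse hull. -/
def IsConstructible [Mul M] (X : Set M) : Prop := ∃ h, InInvHull h ∧ X = pdom h

/-- Membership in `J̄(S)`: sets of the form `X₀` or `X₀ ∖ (X₁ ∪ ⋯ ∪ Xₘ)` with all
`Xᵢ` constructible. -/
def IsConstructibleBar [Mul M] (X : Set M) : Prop :=
  ∃ (X₀ : Set M) (m : ℕ) (Xi : Fin m → Set M),
    IsConstructible X₀ ∧ (∀ i, IsConstructible (Xi i)) ∧ X = X₀ \ ⋃ i, Xi i

/-- `Xi` is a foundation family for `X`: each `Xi i ⊆ X` and every nonempty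
constructible right ideal contained in `X` intersects some `Xi i`. -/
def IsFoundation [Mul M] (X : Set M) {ι : Type*} (Xi : ι → Set M) : Prop :=
  (∀ i, Xi i ⊆ X) ∧
  ∀ Y : Set M, IsConstructible Y → Y.Nonempty → Y ⊆ X → ∃ i, (Y ∩ Xi i).Nonempty

/-- Strong C*-regularity. -/
def StronglyRegular (M : Type*) [Monoid M] : Prop :=
  ∀ (n : ℕ) (h : Fin n → M → Option M), (∀ k, InInvHull (h k)) →
  ∀ (m : ℕ) (X : Set M) (Xi : Fin m → Set M),
    IsConstructible X → (∀ i, IsConstructible (Xi i)) →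
    (X \ ⋃ i, Xi i).Nonempty →
    (X \ ⋃ i, Xi i) ⊆ ⋃ k, {s | h k s = some s} →
    ∃ (l : ℕ) (Y : Fin l → Set M) (kk : Fin l → Fin n),
      (∀ j, IsConstructible (Y j)) ∧
      (X \ ⋃ i, Xi i) ⊆ ⋃ j, Y j ∧
      ∀ j, PFixes (h (kk j)) (Y j)

/-- C*-regularity. -/
def Regular (M : Type*) [Monoid M] : Prop :=
  ∀ (n : ℕ) (h : Fin n → M → Option M), (∀ k, InInvHull (h k)) →
  ∀ X : Set M, IsConstructibleBar X → X.Nonempty →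
    X ⊆ ⋃ k, {s | h k s = some s} →
    ∃ (l : ℕ) (Y : Fin l → Set M) (kk : Fin l → Fin n),
      (∀ j, IsConstructibleBar (Y j)) ∧ X ⊆ ⋃ j, Y j ∧
      ∀ j, PFixes (h (kk j)) (Y j)

/-- Strong C*-regularity on the boundary. -/
def StronglyRegularOnBoundary (M : Type*) [Monoid M] : Prop :=
  ∀ (n : ℕ) (h : Fin n → M → Option M), (∀ k, InInvHull (h k)) →
  ∀ (m : ℕ) (X : Set M) (Xi : Fin m → Set M),
    IsConstructible X → (∀ i, IsConstructible (Xi i)) → (∀ i, Xi i ⊆ X) →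
    (X \ ⋃ i, Xi i).Nonempty →
    (X \ ⋃ i, Xi i) ⊆ ⋃ k, {s | h k s = some s} →
    ∃ (l : ℕ) (Y : Fin l → Set M) (kk : Fin l → Fin n),
      (∀ j, IsConstructible (Y j)) ∧ (∀ j, PFixes (h (kk j)) (Y j)) ∧
      IsFoundation X (Sum.elim Xi Y)

/-- C*-regularity on the boundary. -/
def RegularOnBoundary (M : Type*) [Monoid M] : Prop :=
  ∀ (n : ℕ) (h : Fin n → M → Option M), (∀ k, InInvHull (h k)) →
  ∀ (m : ℕ) (X : Set M) (Xi : Fin m → Set M),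
    IsConstructible X → (∀ i, IsConstructible (Xi i)) → (∀ i, Xi i ⊆ X) →
    (X \ ⋃ i, Xi i).Nonempty →
    (X \ ⋃ i, Xi i) ⊆ ⋃ k, {s | h k s = some s} →
    ∃ (l : ℕ) (Y : Fin l → Set M) (kk : Fin l → Fin n),
      (∀ j, IsConstructibleBar (Y j)) ∧ (∀ j, PFixes (h (kk j)) (Y j)) ∧
      IsFoundation X (Sum.elim Xi Y)

/-- The type of constructible right ideals `J(M)`. -/
def CIdeal (M : Type*) [Mul M] : Type _ := {X : Set M // IsConstructible X}

/-- The character space `{0,1}^{J(M)}` with the topology of pointwise convergence. -/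
abbrev CharSpace (M : Type*) [Mul M] : Type _ := CIdeal M → Bool

/-- The principal character `χ_s`. -/
noncomputable def princhar [Mul M] (s : M) : CharSpace M :=
  fun X => decide (s ∈ X.1)

/-- `Ω(M)`: the closure of the set of principal characters. -/
noncomputable def Omega (M : Type*) [Mul M] : Set (CharSpace M) :=
  closure (Set.range (princhar : M → CharSpace M))

/-- Filters on `J(M)`: nonempty collections of nonempty constructible ideals closed
under intersections and enlargements within `J(M)`. -/
def IsFilterOn [Mul M] (F : Set (CIdeal M)) : Prop :=
  F.Nonempty ∧ (∀ X ∈ F, (X.1 : Set M).Nonempty) ∧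
  (∀ X ∈ F, ∀ Y ∈ F, ∀ Z : CIdeal M, Z.1 = X.1 ∩ Y.1 → Z ∈ F) ∧
  (∀ X ∈ F, ∀ Y : CIdeal M, X.1 ⊆ Y.1 → Y ∈ F)

/-- Nonzero multiplicative `{0,1}`-valued maps on `J(M)`. -/
def IsChar [Mul M] (χ : CharSpace M) : Prop :=
  (∃ X, χ X = true) ∧
  ∀ X Y Z : CIdeal M, Z.1 = X.1 ∩ Y.1 → χ Z = (χ X && χ Y)

/-- Maximal characters: characters whose associated filter is maximal among filters. -/
def IsMaximalChar [Mul M] (χ : CharSpace M) : Prop :=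
  IsChar χ ∧ IsFilterOn {X | χ X = true} ∧
  ∀ G : Set (CIdeal M), IsFilterOn G → {X | χ X = true} ⊆ G → G = {X | χ X = true}

/-- The set of maximal characters `Ω_max(M)`. -/
def OmegaMax (M : Type*) [Mul M] : Set (CharSpace M) := {χ | IsMaximalChar χ}

/-- The boundary `∂Ω(M)`: the closure of the set of maximal characters. -/
noncomputable def BoundaryOmega (M : Type*) [Mul M] : Set (CharSpace M) :=
  closure (OmegaMax M)


/-! ### The monoid `R` -/

/-- Generators of the monoid `R`. -/
inductive Gen : Type
  | a : Gen
  | b : Gen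
  | c : Gen
  | d : Gen
  | f : Gen
  | x : ℤ → Gen
  | y : ℤ → Gen

/-- The defining relations of the monoid `R`. -/
inductive RRel : FreeMonoid Gen → FreeMonoid Gen → Prop
  | abx (n : ℤ) : RRel (FreeMonoid.of Gen.a * FreeMonoid.of Gen.b * FreeMonoid.of (Gen.x n))
      (FreeMonoid.of Gen.b * FreeMonoid.of (Gen.x n))
  | aby (n : ℤ) : RRel (FreeMonoid.of Gen.a * FreeMonoid.of Gen.b * FreeMonoid.of (Gen.y n))
      (FreeMonoid.of Gen.b * FreeMonoid.of (Gen.y (n + 1)))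
  | cbx (n : ℤ) : RRel (FreeMonoid.of Gen.c * FreeMonoid.of Gen.b * FreeMonoid.of (Gen.x n))
      (FreeMonoid.of Gen.b * FreeMonoid.of (Gen.x (n + 1)))
  | cby (n : ℤ) : RRel (FreeMonoid.of Gen.c * FreeMonoid.of Gen.b * FreeMonoid.of (Gen.y n))
      (FreeMonoid.of Gen.b * FreeMonoid.of (Gen.y n))
  | dbx (n : ℤ) (z : Gen) :
      RRel (FreeMonoid.of Gen.d * FreeMonoid.of Gen.b * FreeMonoid.of (Gen.x n) * FreeMonoid.of z)
        (FreeMonoid.of Gen.b * FreeMonoid.of (Gen.x n) * FreeMonoid.of z)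
  | fby (n : ℤ) (z : Gen) :
      RRel (FreeMonoid.of Gen.f * FreeMonoid.of Gen.b * FreeMonoid.of (Gen.y n) * FreeMonoid.of z)
        (FreeMonoid.of Gen.b * FreeMonoid.of (Gen.y n) * FreeMonoid.of z)

/-- The monoid `R`: the quotient of the free monoid on the generators by the congruence
generated by the defining relations. -/
def R : Type := (conGen RRel).Quotient

noncomputable instance : Monoid R := inferInstanceAs (Monoid (conGen RRel).Quotient)

/-- The quotient map from the free monoid on the generators onto `R`. -/
def qR : FreeMonoid Gen →* R := Con.mk' _

/-- The image in `R` of a generator. -/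
noncomputable def gen (g : Gen) : R := qR (FreeMonoid.of g)

/-- A word contains a forbidden factor. -/
def IsForbidden (w : FreeMonoid Gen) : Prop :=
  ∃ n : ℤ,
    w = FreeMonoid.of Gen.a * FreeMonoid.of Gen.b * FreeMonoid.of (Gen.x n) ∨
    w = FreeMonoid.of Gen.a * FreeMonoid.of Gen.b * FreeMonoid.of (Gen.y n) ∨
    w = FreeMonoid.of Gen.c * FreeMonoid.of Gen.b * FreeMonoid.of (Gen.x n) ∨
    w = FreeMonoid.of Gen.c * FreeMonoid.of Gen.b * FreeMonoid.of (Gen.y n) ∨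
    w = FreeMonoid.of Gen.d * FreeMonoid.of Gen.b * FreeMonoid.of (Gen.x n) ∨
    w = FreeMonoid.of Gen.f * FreeMonoid.of Gen.b * FreeMonoid.of (Gen.y n)

/-- A word is reduced if it contains no forbidden factor. -/
def ReducedWord (u : FreeMonoid Gen) : Prop :=
  ¬ ∃ p w s : FreeMonoid Gen, IsForbidden w ∧ u = p * w * s

/-- The prefix word `w₁ w₂ ⋯ wₙ` of an infinite word. -/
def prefixWord (w : ℕ → Gen) (n : ℕ) : FreeMonoid Gen :=
  FreeMonoid.ofList ((List.range n).map w)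

/-! ### Auxiliary rewriting machinery for the monoid `R` -/

/-- Eat a maximal run of `a`'s and `c`'s below a top block `b x_n` (no successor letter):
`a b x_n → b x_n`, `c b x_n → b x_{n+1}`. -/
def eatx : ℤ → List Gen → ℤ × List Gen
  | n, Gen.a :: T => eatx n T
  | n, Gen.c :: T => eatx (n + 1) T
  | n, T => (n, T)

/-- Eat a maximal run of `a`'s and `c`'s below a top block `b y_n` (no successor letter). -/
def eaty : ℤ → List Gen → ℤ × List Gen
  | n, Gen.a :: T => eaty (n + 1) T
  | n, Gen.c :: T => eaty n T
  | n, T => (n, T)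

/-- Eat a maximal run of `a`'s, `c`'s and `d`'s below a block `b x_n z` (successor present). -/
def eatX : ℤ → List Gen → ℤ × List Gen
  | n, Gen.a :: T => eatX n T
  | n, Gen.c :: T => eatX (n + 1) T
  | n, Gen.d :: T => eatX n T
  | n, T => (n, T)

/-- Eat a maximal run of `a`'s, `c`'s and `f`'s below a block `b y_n z` (successor present). -/
def eatY : ℤ → List Gen → ℤ × List Gen
  | n, Gen.a :: T => eatY (n + 1) T
  | n, Gen.c :: T => eatY n T
  | n, Gen.f :: T => eatY n T
  | n, T => (n, T)

/-- Reduce the top of a stack (stacks are reversed words, head = last letter). -/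
def reduceTop : List Gen → List Gen
  | Gen.x n :: Gen.b :: T => Gen.x (eatx n T).1 :: Gen.b :: (eatx n T).2
  | Gen.y n :: Gen.b :: T => Gen.y (eaty n T).1 :: Gen.b :: (eaty n T).2
  | z :: Gen.x n :: Gen.b :: T => z :: Gen.x (eatX n T).1 :: Gen.b :: (eatX n T).2
  | z :: Gen.y n :: Gen.b :: T => z :: Gen.y (eatY n T).1 :: Gen.b :: (eatY n T).2
  | S => S

/-- Push a letter onto a stack and reduce. -/
def pushL (S : List Gen) (g : Gen) : List Gen := reduceTop (g :: S)

/-- Process a word letter by letter starting from a stack. -/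
def proc (S : List Gen) (u : List Gen) : List Gen := u.foldl pushL S

theorem rt_xb (n : ℤ) (T : List Gen) :
    reduceTop (Gen.x n :: Gen.b :: T) = Gen.x (eatx n T).1 :: Gen.b :: (eatx n T).2 := rfl

theorem rt_yb (n : ℤ) (T : List Gen) :
    reduceTop (Gen.y n :: Gen.b :: T) = Gen.y (eaty n T).1 :: Gen.b :: (eaty n T).2 := rfl

theorem rt_zx (z : Gen) (n : ℤ) (T : List Gen) :
    reduceTop (z :: Gen.x n :: Gen.b :: T)
      = z :: Gen.x (eatX n T).1 :: Gen.b :: (eatX n T).2 := by cases z <;> rfl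

theorem rt_zy (z : Gen) (n : ℤ) (T : List Gen) :
    reduceTop (z :: Gen.y n :: Gen.b :: T)
      = z :: Gen.y (eatY n T).1 :: Gen.b :: (eatY n T).2 := by cases z <;> rfl

theorem eatX_eatx : ∀ (T : List Gen) (n : ℤ), eatX (eatx n T).1 (eatx n T).2 = eatX n T := by
  intro T
  induction T with
  | nil => intro n; rfl
  | cons g T ih => intro n; cases g <;> simp [eatx, eatX, ih]

theorem eatY_eaty : ∀ (T : List Gen) (n : ℤ), eatY (eaty n T).1 (eaty n T).2 = eatY n T := by
  intro T
  induction T with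
  | nil => intro n; rfl
  | cons g T ih => intro n; cases g <;> simp [eaty, eatY, ih]

theorem k2_abx (S : List Gen) (n : ℤ) :
    proc S [Gen.a, Gen.b, Gen.x n] = proc S [Gen.b, Gen.x n] := by
  rcases S with _ | ⟨g0, _ | ⟨g1, T⟩⟩
  · rfl
  · cases g0 <;> rfl
  · cases g0 <;> cases g1 <;> first | rfl |
      simp [proc, pushL, reduceTop, rt_xb, rt_yb, rt_zx, rt_zy, eatx, eaty, eatX, eatY]

theorem k2_aby (S : List Gen) (n : ℤ) :
    proc S [Gen.a, Gen.b, Gen.y n] = proc S [Gen.b, Gen.y (n + 1)] := by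
  rcases S with _ | ⟨g0, _ | ⟨g1, T⟩⟩
  · rfl
  · cases g0 <;> rfl
  · cases g0 <;> cases g1 <;> first | rfl |
      simp [proc, pushL, reduceTop, rt_xb, rt_yb, rt_zx, rt_zy, eatx, eaty, eatX, eatY]

theorem k2_cbx (S : List Gen) (n : ℤ) :
    proc S [Gen.c, Gen.b, Gen.x n] = proc S [Gen.b, Gen.x (n + 1)] := by
  rcases S with _ | ⟨g0, _ | ⟨g1, T⟩⟩
  · rfl
  · cases g0 <;> rfl
  · cases g0 <;> cases g1 <;> first | rfl |
      simp [proc, pushL, reduceTop, rt_xb, rt_yb, rt_zx, rt_zy, eatx, eaty, eatX, eatY]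

theorem k2_cby (S : List Gen) (n : ℤ) :
    proc S [Gen.c, Gen.b, Gen.y n] = proc S [Gen.b, Gen.y n] := by
  rcases S with _ | ⟨g0, _ | ⟨g1, T⟩⟩
  · rfl
  · cases g0 <;> rfl
  · cases g0 <;> cases g1 <;> first | rfl |
      simp [proc, pushL, reduceTop, rt_xb, rt_yb, rt_zx, rt_zy, eatx, eaty, eatX, eatY]

theorem k2_dbx (S : List Gen) (n : ℤ) (z : Gen) :
    proc S [Gen.d, Gen.b, Gen.x n, z] = proc S [Gen.b, Gen.x n, z] := by
  rcases S with _ | ⟨g0, _ | ⟨g1, T⟩⟩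
  · simp [proc, pushL, reduceTop, rt_xb, rt_yb, rt_zx, rt_zy, eatx, eaty, eatX, eatY]
  · cases g0 <;>
      simp [proc, pushL, reduceTop, rt_xb, rt_yb, rt_zx, rt_zy, eatx, eaty, eatX, eatY]
  · cases g0 <;> cases g1 <;>
      simp [proc, pushL, reduceTop, rt_xb, rt_yb, rt_zx, rt_zy, eatx, eaty, eatX, eatY,
        eatX_eatx, eatY_eaty]

theorem k2_fby (S : List Gen) (n : ℤ) (z : Gen) :
    proc S [Gen.f, Gen.b, Gen.y n, z] = proc S [Gen.b, Gen.y n, z] := by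
  rcases S with _ | ⟨g0, _ | ⟨g1, T⟩⟩
  · simp [proc, pushL, reduceTop, rt_xb, rt_yb, rt_zx, rt_zy, eatx, eaty, eatX, eatY]
  · cases g0 <;>
      simp [proc, pushL, reduceTop, rt_xb, rt_yb, rt_zx, rt_zy, eatx, eaty, eatX, eatY]
  · cases g0 <;> cases g1 <;>
      simp [proc, pushL, reduceTop, rt_xb, rt_yb, rt_zx, rt_zy, eatx, eaty, eatX, eatY,
        eatX_eatx, eatY_eaty]

/-- The congruence of having equal processed stacks. -/
def NFCon : Con (FreeMonoid Gen) where
  r u v := ∀ S : List Gen, proc S (FreeMonoid.toList u) = proc S (FreeMonoid.toList v)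
  iseqv :=
    { refl := fun _ _ => rfl
      symm := fun h S => (h S).symm
      trans := fun h1 h2 S => (h1 S).trans (h2 S) }
  mul' := by
    intro p q p' q' h1 h2 S
    have e : ∀ (a b : FreeMonoid Gen) (S : List Gen),
        proc S (FreeMonoid.toList (a * b))
          = proc (proc S (FreeMonoid.toList a)) (FreeMonoid.toList b) := by
      intro a b S
      rw [FreeMonoid.toList_mul]
      exact List.foldl_append
    rw [e, e, h1 S, h2]

theorem rrel_nf : ∀ p q, RRel p q → NFCon p q := by
  intro p q hr
  cases hr with
  | abx n => exact fun S => k2_abx S n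
  | aby n => exact fun S => k2_aby S n
  | cbx n => exact fun S => k2_cbx S n
  | cby n => exact fun S => k2_cby S n
  | dbx n z => exact fun S => k2_dbx S n z
  | fby n z => exact fun S => k2_fby S n z

theorem sound {u v : FreeMonoid Gen} (h : (conGen RRel) u v) :
    ∀ S : List Gen, proc S (FreeMonoid.toList u) = proc S (FreeMonoid.toList v) :=
  Con.conGen_le.2 rrel_nf h

/-- The set of cases for `reduceTop`. -/
theorem reduceTop_cases (L : List Gen) :
    reduceTop L = L ∨ (∃ n T, L = Gen.x n :: Gen.b :: T) ∨ (∃ n T, L = Gen.y n :: Gen.b :: T) ∨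
      (∃ z n T, L = z :: Gen.x n :: Gen.b :: T) ∨ (∃ z n T, L = z :: Gen.y n :: Gen.b :: T) := by
  rcases L with _ | ⟨g0, _ | ⟨g1, _ | ⟨g2, L3⟩⟩⟩
  · exact Or.inl rfl
  · exact Or.inl (by cases g0 <;> rfl)
  · cases g0 <;> cases g1 <;>
      first
        | exact Or.inr (Or.inl ⟨_, _, rfl⟩)
        | exact Or.inr (Or.inr (Or.inl ⟨_, _, rfl⟩))
        | exact Or.inl rfl
  · cases g0 <;> cases g1 <;> cases g2 <;>
      first
        | exact Or.inr (Or.inl ⟨_, _, rfl⟩)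
        | exact Or.inr (Or.inr (Or.inl ⟨_, _, rfl⟩))
        | exact Or.inr (Or.inr (Or.inr (Or.inl ⟨_, _, _, rfl⟩)))
        | exact Or.inr (Or.inr (Or.inr (Or.inr ⟨_, _, _, rfl⟩)))
        | exact Or.inl rfl

theorem reduced_append {l1 l2 : List Gen}
    (h : ReducedWord (FreeMonoid.ofList (l1 ++ l2))) :
    ReducedWord (FreeMonoid.ofList l1) := by
  rintro ⟨p, w, t, hf, he⟩
  refine h ⟨p, w, t * FreeMonoid.ofList l2, hf, ?_⟩
  rw [FreeMonoid.ofList_append, he]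
  simp [mul_assoc]

theorem rev_eq {l T : List Gen} {g : Gen} (h : g :: T = l.reverse) :
    l = T.reverse ++ [g] := by
  have h2 := congrArg List.reverse h
  simpa using h2.symm

/-- Processing a reduced word from the empty stack just reverses it. -/
theorem proc_reduced : ∀ l : List Gen, ReducedWord (FreeMonoid.ofList l) →
    proc [] l = l.reverse := by
  intro l
  induction l using List.reverseRecOn with
  | nil => intro _; rfl
  | append_singleton l g ih =>
    intro h
    have hl := reduced_append (l1 := l) (l2 := [g]) h
    have hp : proc [] (l ++ [g]) = pushL (proc [] l) g := by
      simp [proc, List.foldl_append]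
    rw [hp, ih hl, List.reverse_append]
    show reduceTop (g :: l.reverse) = [g] ++ l.reverse
    rcases reduceTop_cases (g :: l.reverse) with hid | ⟨n, T, hT⟩ | ⟨n, T, hT⟩
      | ⟨z, n, T, hT⟩ | ⟨z, n, T, hT⟩
    · rw [hid]; rfl
    · -- g = x n, l.reverse = b :: T
      have hg : g = Gen.x n := by injection hT
      have hO : l.reverse = Gen.b :: T := by injection hT
      subst hg
      rw [hO, rt_xb]
      rcases T with _ | ⟨t0, T1⟩
      · rfl
      · have hl1 : l = T1.reverse ++ [t0, Gen.b] := by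
          have := rev_eq hO.symm
          simpa using this
        cases t0
        case a =>
          exfalso
          refine h ⟨FreeMonoid.ofList T1.reverse, _, 1, ⟨n, Or.inl rfl⟩,
            FreeMonoid.toList.injective ?_⟩
          simp [hl1]
        case c =>
          exfalso
          refine h ⟨FreeMonoid.ofList T1.reverse, _, 1,
            ⟨n, Or.inr (Or.inr (Or.inl rfl))⟩, FreeMonoid.toList.injective ?_⟩
          simp [hl1]
        all_goals rfl
    · -- g = y n, l.reverse = b :: T
      have hg : g = Gen.y n := by injection hT
      have hO : l.reverse = Gen.b :: T := by injection hT
      subst hg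
      rw [hO, rt_yb]
      rcases T with _ | ⟨t0, T1⟩
      · rfl
      · have hl1 : l = T1.reverse ++ [t0, Gen.b] := by
          have := rev_eq hO.symm
          simpa using this
        cases t0
        case a =>
          exfalso
          refine h ⟨FreeMonoid.ofList T1.reverse, _, 1, ⟨n, Or.inr (Or.inl rfl)⟩,
            FreeMonoid.toList.injective ?_⟩
          simp [hl1]
        case c =>
          exfalso
          refine h ⟨FreeMonoid.ofList T1.reverse, _, 1,
            ⟨n, Or.inr (Or.inr (Or.inr (Or.inl rfl)))⟩, FreeMonoid.toList.injective ?_⟩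
          simp [hl1]
        all_goals rfl
    · -- g = z, l.reverse = x n :: b :: T
      have hg : g = z := by injection hT
      have hO : l.reverse = Gen.x n :: Gen.b :: T := by injection hT
      subst hg
      rw [hO, rt_zx]
      rcases T with _ | ⟨t0, T1⟩
      · rfl
      · have hl1 : l = T1.reverse ++ [t0, Gen.b, Gen.x n] := by
          have := rev_eq hO.symm
          simpa using this
        cases t0
        case a =>
          exfalso
          refine hl ⟨FreeMonoid.ofList T1.reverse, _, 1, ⟨n, Or.inl rfl⟩,
            FreeMonoid.toList.injective ?_⟩
          simp [hl1]
        case c =>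
          exfalso
          refine hl ⟨FreeMonoid.ofList T1.reverse, _, 1,
            ⟨n, Or.inr (Or.inr (Or.inl rfl))⟩, FreeMonoid.toList.injective ?_⟩
          simp [hl1]
        case d =>
          exfalso
          refine hl ⟨FreeMonoid.ofList T1.reverse, _, 1,
            ⟨n, Or.inr (Or.inr (Or.inr (Or.inr (Or.inl rfl))))⟩,
            FreeMonoid.toList.injective ?_⟩
          simp [hl1]
        all_goals rfl
    · -- g = z, l.reverse = y n :: b :: T
      have hg : g = z := by injection hT
      have hO : l.reverse = Gen.y n :: Gen.b :: T := by injection hT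
      subst hg
      rw [hO, rt_zy]
      rcases T with _ | ⟨t0, T1⟩
      · rfl
      · have hl1 : l = T1.reverse ++ [t0, Gen.b, Gen.y n] := by
          have := rev_eq hO.symm
          simpa using this
        cases t0
        case a =>
          exfalso
          refine hl ⟨FreeMonoid.ofList T1.reverse, _, 1, ⟨n, Or.inr (Or.inl rfl)⟩,
            FreeMonoid.toList.injective ?_⟩
          simp [hl1]
        case c =>
          exfalso
          refine hl ⟨FreeMonoid.ofList T1.reverse, _, 1,
            ⟨n, Or.inr (Or.inr (Or.inr (Or.inl rfl)))⟩, FreeMonoid.toList.injective ?_⟩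
          simp [hl1]
        case f =>
          exfalso
          refine hl ⟨FreeMonoid.ofList T1.reverse, _, 1,
            ⟨n, Or.inr (Or.inr (Or.inr (Or.inr (Or.inr rfl))))⟩,
            FreeMonoid.toList.injective ?_⟩
          simp [hl1]
        all_goals rfl

/-- The letters that can be deleted by the defining relations. -/
def ACDF (g : Gen) : Prop := g = Gen.a ∨ g = Gen.c ∨ g = Gen.d ∨ g = Gen.f

theorem not_acdf_b : ¬ ACDF Gen.b := by rintro (h | h | h | h) <;> exact Gen.noConfusion h

/-- Invariant for the eaten region of the stack, relative to a reference word `s`. -/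
def TS (s T : List Gen) : Prop :=
  (∃ U, T = U ++ s.reverse) ∨
  (∃ U p g r, s = p ++ g :: r ∧ ACDF g ∧ T = U ++ Gen.b :: p.reverse) ∨
  (∃ p g r, s = p ++ g :: r ∧ ACDF g ∧ T = p.reverse) ∨
  (∃ p, s = p ++ [Gen.b] ∧ T = p.reverse)

/-- Invariant for post-push stacks, relative to a reference word `s`. -/
def InvS (s O : List Gen) : Prop :=
  (∃ U, O = U ++ s.reverse) ∨
  (∃ U p g r, s = p ++ g :: r ∧ ACDF g ∧ O = U ++ Gen.b :: p.reverse)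

theorem invS_cons {s O : List Gen} (g : Gen) (h : InvS s O) : InvS s (g :: O) := by
  rcases h with ⟨U, rfl⟩ | ⟨U, p, gg, r, hs, hg, rfl⟩
  · exact Or.inl ⟨g :: U, rfl⟩
  · exact Or.inr ⟨g :: U, p, gg, r, hs, hg, rfl⟩

theorem ts_tail {s T : List Gen} (g₀ : Gen) (hg : ACDF g₀) (h : TS s (g₀ :: T)) : TS s T := by
  rcases h with ⟨U, hU⟩ | ⟨U, p, g, r, hs, hgg, hU⟩ | ⟨p, g, r, hs, hgg, hp⟩ | ⟨p, hs, hp⟩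
  · rcases U with _ | ⟨u, U⟩
    · rw [List.nil_append] at hU
      have h1 : s = T.reverse ++ [g₀] := rev_eq hU
      exact Or.inr (Or.inr (Or.inl ⟨T.reverse, g₀, [], by simpa using h1, hg, by simp⟩))
    · simp only [List.cons_append, List.nil_append] at hU
      injection hU with _ h2
      exact Or.inl ⟨U, h2⟩
  · rcases U with _ | ⟨u, U⟩
    · rw [List.nil_append] at hU
      injection hU with h1 _
      exact absurd (h1 ▸ hg) not_acdf_b
    · simp only [List.cons_append, List.nil_append] at hU
      injection hU with _ h2
      exact Or.inr (Or.inl ⟨U, p, g, r, hs, hgg, h2⟩)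
  · have h1 : p = T.reverse ++ [g₀] := rev_eq hp
    refine Or.inr (Or.inr (Or.inl ⟨T.reverse, g₀, g :: r, ?_, hg, by simp⟩))
    rw [hs, h1]
    simp
  · have h1 : p = T.reverse ++ [g₀] := rev_eq hp
    refine Or.inr (Or.inr (Or.inl ⟨T.reverse, g₀, [Gen.b], ?_, hg, by simp⟩))
    rw [hs, h1]
    simp

theorem eatx_ts {s : List Gen} : ∀ (T : List Gen) (n : ℤ), TS s T → TS s (eatx n T).2 := by
  intro T
  induction T with
  | nil => intro n h; exact h
  | cons g T ih =>
    intro n h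
    cases g <;> first
      | exact h
      | exact ih _ (ts_tail _ (by simp [ACDF]) h)

theorem eaty_ts {s : List Gen} : ∀ (T : List Gen) (n : ℤ), TS s T → TS s (eaty n T).2 := by
  intro T
  induction T with
  | nil => intro n h; exact h
  | cons g T ih =>
    intro n h
    cases g <;> first
      | exact h
      | exact ih _ (ts_tail _ (by simp [ACDF]) h)

theorem eatX_ts {s : List Gen} : ∀ (T : List Gen) (n : ℤ), TS s T → TS s (eatX n T).2 := by
  intro T
  induction T with
  | nil => intro n h; exact h
  | cons g T ih =>
    intro n h
    cases g <;> first
      | exact h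
      | exact ih _ (ts_tail _ (by simp [ACDF]) h)

theorem eatY_ts {s : List Gen} : ∀ (T : List Gen) (n : ℤ), TS s T → TS s (eatY n T).2 := by
  intro T
  induction T with
  | nil => intro n h; exact h
  | cons g T ih =>
    intro n h
    cases g <;> first
      | exact h
      | exact ih _ (ts_tail _ (by simp [ACDF]) h)

theorem ts_reattach {s : List Gen} (X T : List Gen) (h : TS s T) :
    InvS s (X ++ Gen.b :: T) := by
  rcases h with ⟨U, rfl⟩ | ⟨U, p, g, r, hs, hg, rfl⟩ | ⟨p, g, r, hs, hg, rfl⟩ | ⟨p, hs, rfl⟩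
  · exact Or.inl ⟨X ++ Gen.b :: U, by simp⟩
  · exact Or.inr ⟨X ++ Gen.b :: U, p, g, r, hs, hg, by simp⟩
  · exact Or.inr ⟨X, p, g, r, hs, hg, rfl⟩
  · exact Or.inl ⟨X, by rw [hs]; simp⟩

theorem invS_b_tail {s T : List Gen} (h : InvS s (Gen.b :: T)) : TS s T := by
  rcases h with ⟨U, hU⟩ | ⟨U, p, g, r, hs, hg, hU⟩
  · rcases U with _ | ⟨u, U⟩
    · rw [List.nil_append] at hU
      exact Or.inr (Or.inr (Or.inr ⟨T.reverse, by simpa using rev_eq hU, by simp⟩))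
    · simp only [List.cons_append, List.nil_append] at hU
      injection hU with _ h2
      exact Or.inl ⟨U, h2⟩
  · rcases U with _ | ⟨u, U⟩
    · rw [List.nil_append] at hU
      injection hU with _ h2
      exact Or.inr (Or.inr (Or.inl ⟨p, g, r, hs, hg, h2⟩))
    · simp only [List.cons_append, List.nil_append] at hU
      injection hU with _ h2
      exact Or.inr (Or.inl ⟨U, p, g, r, hs, hg, h2⟩)

theorem pushL_inv {s O : List Gen} (g : Gen) (h : InvS s O) : InvS s (pushL O g) := by
  show InvS s (reduceTop (g :: O))
  rcases reduceTop_cases (g :: O) with hid | ⟨n, T, hT⟩ | ⟨n, T, hT⟩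
    | ⟨z, n, T, hT⟩ | ⟨z, n, T, hT⟩
  · rw [hid]; exact invS_cons g h
  · have hO : O = Gen.b :: T := by injection hT
    rw [hT, rt_xb]
    have hts : TS s (eatx n T).2 := eatx_ts T n (invS_b_tail (hO ▸ h))
    simpa using ts_reattach [Gen.x (eatx n T).1] _ hts
  · have hO : O = Gen.b :: T := by injection hT
    rw [hT, rt_yb]
    have hts : TS s (eaty n T).2 := eaty_ts T n (invS_b_tail (hO ▸ h))
    simpa using ts_reattach [Gen.y (eaty n T).1] _ hts
  · -- shape `z :: x n :: b :: T`
    have hO : O = Gen.x n :: Gen.b :: T := by injection hT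
    rw [hT, rt_zx]
    rw [hO] at h
    rcases h with ⟨U, hU⟩ | ⟨U, p, gg, r, hsp, hg, hU⟩
    · rcases U with _ | ⟨u, _ | ⟨u1, U⟩⟩
      · rw [List.nil_append] at hU
        rcases T with _ | ⟨t0, T1⟩
        · exact Or.inl ⟨[z], by rw [← hU]; rfl⟩
        · have hseq : s = T1.reverse ++ t0 :: Gen.b :: Gen.x n :: [] := by
            simpa using rev_eq hU
          have hstop : ∀ t0' : Gen, ACDF t0' → TS s T1 → ∀ m : ℤ,
              InvS s (z :: Gen.x (eatX m T1).1 :: Gen.b :: (eatX m T1).2) := by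
            intro t0' _ hts m
            simpa using ts_reattach [z, Gen.x (eatX m T1).1] _ (eatX_ts T1 m hts)
          cases t0
          case a =>
            have hts : TS s T1 := Or.inr (Or.inr (Or.inl
              ⟨T1.reverse, Gen.a, [Gen.b, Gen.x n], hseq, Or.inl rfl, by simp⟩))
            exact hstop Gen.a (Or.inl rfl) hts n
          case c =>
            have hts : TS s T1 := Or.inr (Or.inr (Or.inl
              ⟨T1.reverse, Gen.c, [Gen.b, Gen.x n], hseq, Or.inr (Or.inl rfl), by simp⟩))
            exact hstop Gen.c (Or.inr (Or.inl rfl)) hts (n + 1)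
          case d =>
            have hts : TS s T1 := Or.inr (Or.inr (Or.inl
              ⟨T1.reverse, Gen.d, [Gen.b, Gen.x n], hseq, Or.inr (Or.inr (Or.inl rfl)),
                by simp⟩))
            exact hstop Gen.d (Or.inr (Or.inr (Or.inl rfl))) hts n
          all_goals exact Or.inl ⟨[z], by rw [← hU]; rfl⟩
      · simp only [List.cons_append, List.nil_append] at hU
        injection hU with _ h2
        have h4 : TS s T := Or.inr (Or.inr (Or.inr
          ⟨T.reverse, by simpa using rev_eq h2, by simp⟩))
        simpa using ts_reattach [z, Gen.x (eatX n T).1] _ (eatX_ts T n h4)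
      · simp only [List.cons_append, List.nil_append] at hU
        injection hU with _ h2
        injection h2 with _ h3
        have h4 : TS s T := Or.inl ⟨U, h3⟩
        simpa using ts_reattach [z, Gen.x (eatX n T).1] _ (eatX_ts T n h4)
    · rcases U with _ | ⟨u, _ | ⟨u1, U⟩⟩
      · rw [List.nil_append] at hU
        exact absurd hU (by simp)
      · simp only [List.cons_append, List.nil_append] at hU
        injection hU with _ h2
        injection h2 with _ h3
        have h4 : TS s T := Or.inr (Or.inr (Or.inl ⟨p, gg, r, hsp, hg, h3⟩))
        simpa using ts_reattach [z, Gen.x (eatX n T).1] _ (eatX_ts T n h4)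
      · simp only [List.cons_append, List.nil_append] at hU
        injection hU with _ h2
        injection h2 with _ h3
        have h4 : TS s T := Or.inr (Or.inl ⟨U, p, gg, r, hsp, hg, h3⟩)
        simpa using ts_reattach [z, Gen.x (eatX n T).1] _ (eatX_ts T n h4)
  · -- shape `z :: y n :: b :: T`
    have hO : O = Gen.y n :: Gen.b :: T := by injection hT
    rw [hT, rt_zy]
    rw [hO] at h
    rcases h with ⟨U, hU⟩ | ⟨U, p, gg, r, hsp, hg, hU⟩
    · rcases U with _ | ⟨u, _ | ⟨u1, U⟩⟩
      · rw [List.nil_append] at hU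
        rcases T with _ | ⟨t0, T1⟩
        · exact Or.inl ⟨[z], by rw [← hU]; rfl⟩
        · have hseq : s = T1.reverse ++ t0 :: Gen.b :: Gen.y n :: [] := by
            simpa using rev_eq hU
          have hstop : TS s T1 → ∀ m : ℤ,
              InvS s (z :: Gen.y (eatY m T1).1 :: Gen.b :: (eatY m T1).2) := by
            intro hts m
            simpa using ts_reattach [z, Gen.y (eatY m T1).1] _ (eatY_ts T1 m hts)
          cases t0
          case a =>
            exact hstop (Or.inr (Or.inr (Or.inl
              ⟨T1.reverse, Gen.a, [Gen.b, Gen.y n], hseq, Or.inl rfl, by simp⟩))) (n + 1)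
          case c =>
            exact hstop (Or.inr (Or.inr (Or.inl
              ⟨T1.reverse, Gen.c, [Gen.b, Gen.y n], hseq, Or.inr (Or.inl rfl), by simp⟩))) n
          case f =>
            exact hstop (Or.inr (Or.inr (Or.inl
              ⟨T1.reverse, Gen.f, [Gen.b, Gen.y n], hseq,
                Or.inr (Or.inr (Or.inr rfl)), by simp⟩))) n
          all_goals exact Or.inl ⟨[z], by rw [← hU]; rfl⟩
      · simp only [List.cons_append, List.nil_append] at hU
        injection hU with _ h2
        have h4 : TS s T := Or.inr (Or.inr (Or.inr
          ⟨T.reverse, by simpa using rev_eq h2, by simp⟩))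
        simpa using ts_reattach [z, Gen.y (eatY n T).1] _ (eatY_ts T n h4)
      · simp only [List.cons_append, List.nil_append] at hU
        injection hU with _ h2
        injection h2 with _ h3
        have h4 : TS s T := Or.inl ⟨U, h3⟩
        simpa using ts_reattach [z, Gen.y (eatY n T).1] _ (eatY_ts T n h4)
    · rcases U with _ | ⟨u, _ | ⟨u1, U⟩⟩
      · rw [List.nil_append] at hU
        exact absurd hU (by simp)
      · simp only [List.cons_append, List.nil_append] at hU
        injection hU with _ h2
        injection h2 with _ h3
        have h4 : TS s T := Or.inr (Or.inr (Or.inl ⟨p, gg, r, hsp, hg, h3⟩))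
        simpa using ts_reattach [z, Gen.y (eatY n T).1] _ (eatY_ts T n h4)
      · simp only [List.cons_append, List.nil_append] at hU
        injection hU with _ h2
        injection h2 with _ h3
        have h4 : TS s T := Or.inr (Or.inl ⟨U, p, gg, r, hsp, hg, h3⟩)
        simpa using ts_reattach [z, Gen.y (eatY n T).1] _ (eatY_ts T n h4)

theorem proc_inv {s : List Gen} : ∀ (t S : List Gen), InvS s S → InvS s (proc S t) := by
  intro t
  induction t with
  | nil => intro S h; exact h
  | cons g t ih => intro S h; exact ih _ (pushL_inv g h)

/-- The list of the first `n` letters of an infinite word. -/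
def prefL (u : ℕ → Gen) (n : ℕ) : List Gen := (List.range n).map u

theorem prefixWord_eq (u : ℕ → Gen) (n : ℕ) :
    prefixWord u n = FreeMonoid.ofList (prefL u n) := rfl

theorem prefL_succ (u : ℕ → Gen) (n : ℕ) : prefL u (n + 1) = prefL u n ++ [u n] := by
  simp [prefL, List.range_succ]

theorem prefL_length (u : ℕ → Gen) (n : ℕ) : (prefL u n).length = n := by simp [prefL]

theorem prefL_take (u : ℕ → Gen) {m n : ℕ} (h : m ≤ n) :
    (prefL u n).take m = prefL u m := by
  simp [prefL, ← List.map_take, List.take_range, Nat.min_eq_left h]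

theorem singleton_of_concat_eq {l1 l2 : List Gen} {α β : Gen}
    (h : l1 ++ [α] = l2 ++ [β]) (hl : l1.length = l2.length) : α = β := by
  have := List.append_inj_right h hl
  injection this

theorem inv_ne_pref (u : ℕ → Gen) (k : ℕ) (γ : Gen) (hne : u k ≠ γ)
    (hb : γ = Gen.b ∨ u k ≠ Gen.b) (n : ℕ) :
    ¬ InvS (prefL u k ++ [γ]) ((prefL u n).reverse) := by
  set s : List Gen := prefL u k ++ [γ] with hs
  have hslen : s.length = k + 1 := by simp [hs, prefL_length]
  rintro (⟨U, hU⟩ | ⟨U, p, g, r, hsp, hg, hU⟩)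
  · have he : prefL u n = s ++ U.reverse := by
      have h2 := congrArg List.reverse hU
      simpa using h2
    have hn : k + 1 ≤ n := by
      have h3 := congrArg List.length he
      simp only [prefL_length, List.length_append, hslen] at h3
      omega
    have h1 : (prefL u n).take (k + 1) = prefL u k ++ [u k] := by
      rw [prefL_take u hn, prefL_succ]
    have h2 : (prefL u n).take (k + 1) = prefL u k ++ [γ] := by
      rw [he, ← hslen, List.take_left, hs]
    exact hne (singleton_of_concat_eq (h1.symm.trans h2) rfl)
  · have he : prefL u n = p ++ Gen.b :: U.reverse := by
      have h2 := congrArg List.reverse hU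
      simpa using h2
    set m := p.length with hm
    have hmk : m ≤ k := by
      have h3 := congrArg List.length hsp
      simp only [hslen, List.length_append, List.length_cons] at h3
      omega
    have hmn : m + 1 ≤ n := by
      have h3 := congrArg List.length he
      simp only [prefL_length, List.length_append, List.length_cons] at h3
      omega
    have hum : u m = Gen.b := by
      have h1 : (prefL u n).take (m + 1) = prefL u m ++ [u m] := by
        rw [prefL_take u hmn, prefL_succ]
      have h2 : (prefL u n).take (m + 1) = p ++ [Gen.b] := by
        rw [he, hm, List.take_length_add_append 1]
        rfl
      exact singleton_of_concat_eq (h1.symm.trans h2)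
        (by simp [prefL_length, hm])
    have hsg : s.take (m + 1) = p ++ [g] := by
      rw [hsp, hm, List.take_length_add_append 1]
      rfl
    rcases Nat.lt_or_ge m k with hlt | hge
    · -- m < k : the eaten letter `g` equals `u m`, so `u m` is in `ACDF`, but `u m = b`.
      have h1 : s.take (m + 1) = prefL u m ++ [u m] := by
        rw [hs, List.take_append_of_le_length (by simp [prefL_length]; omega),
          prefL_take u (by omega), prefL_succ]
      have hgum : u m = g :=
        singleton_of_concat_eq (h1.symm.trans hsg) (by simp [prefL_length, hm])
      rw [← hgum, hum] at hg
      exact not_acdf_b hg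
    · -- m = k : then `g = γ`, `u k = b`.
      have hmk' : m = k := le_antisymm hmk hge
      have h1 : s.take (m + 1) = prefL u k ++ [γ] := by
        rw [hmk', ← hslen, List.take_length]
      have hgγ : γ = g := by
        refine singleton_of_concat_eq (h1.symm.trans hsg) ?_
        rw [prefL_length]
        omega
      rcases hb with hb | hb
      · rw [← hgγ, hb] at hg
        exact not_acdf_b hg
      · exact hb (hmk' ▸ hum)

/-- The key exclusion lemma: no prefix of the reduced infinite word `u` lies in the right
ideal generated by `(prefix of u of length k) ++ [γ]` if `γ` differs from `u k` (and either
`γ = b` or `u k ≠ b`). -/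
theorem exclude (u : ℕ → Gen) (hu : ∀ n, ReducedWord (prefixWord u n)) (k : ℕ) (γ : Gen)
    (hred : ReducedWord (FreeMonoid.ofList (prefL u k ++ [γ])))
    (hne : u k ≠ γ) (hb : γ = Gen.b ∨ u k ≠ Gen.b) (n : ℕ) :
    ¬ ∃ r : R, qR (FreeMonoid.ofList (prefL u k ++ [γ])) * r = qR (prefixWord u n) := by
  rintro ⟨r, hr⟩
  obtain ⟨t₀, ht⟩ := Con.mk'_surjective (c := conGen RRel) r
  have ht' : qR t₀ = r := ht
  have hr' : qR (FreeMonoid.ofList (prefL u k ++ [γ]) * t₀) = qR (prefixWord u n) := by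
    rw [map_mul, ht']
    exact hr
  have hcon : (conGen RRel) (FreeMonoid.ofList (prefL u k ++ [γ]) * t₀) (prefixWord u n) :=
    ((conGen RRel).eq).mp hr'
  have hP := sound hcon []
  rw [FreeMonoid.toList_mul] at hP
  have hLHS : proc [] (FreeMonoid.toList (FreeMonoid.ofList (prefL u k ++ [γ]))
        ++ FreeMonoid.toList t₀)
      = proc ((prefL u k ++ [γ]).reverse) (FreeMonoid.toList t₀) := by
    show List.foldl pushL [] _ = _
    rw [List.foldl_append]
    rw [show List.foldl pushL [] (FreeMonoid.toList (FreeMonoid.ofList (prefL u k ++ [γ])))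
        = (prefL u k ++ [γ]).reverse from proc_reduced _ hred]
    rfl
  rw [hLHS] at hP
  have hRHS : proc [] (FreeMonoid.toList (prefixWord u n)) = (prefL u n).reverse :=
    proc_reduced (prefL u n) (hu n)
  rw [hRHS] at hP
  have hInv : InvS (prefL u k ++ [γ]) ((prefL u n).reverse) := by
    rw [← hP]
    exact proc_inv _ _ (Or.inl ⟨[], (List.nil_append _).symm⟩)
  exact inv_ne_pref u k γ hne hb n hInv

/-- The principal right ideal generated by `σ`. -/
def idealOf (σ : R) : Set R := {t | ∃ r : R, σ * r = t}

theorem idealOf_constructible (σ : R) : IsConstructible (idealOf σ) := by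
  refine ⟨List.foldl (fun acc p => pcomp (pblock p) acc) pid [((1 : R), σ)],
    ⟨[((1 : R), σ)], by simp, rfl⟩, ?_⟩
  ext t
  show (∃ r : R, σ * r = t) ↔
    ¬ (List.foldl (fun acc p => pcomp (pblock p) acc) pid [((1 : R), σ)] t = none)
  have hval : List.foldl (fun acc p => pcomp (pblock p) acc) pid [((1 : R), σ)] t
      = pinv (ptransl σ) ((1 : R) * t) := rfl
  rw [hval, one_mul]
  unfold pinv
  split_ifs with hcond
  · simp only [ne_eq, reduceCtorEq, not_false_eq_true, iff_true]
    obtain ⟨r, hrr⟩ := hcond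
    have : σ * r = t := by
      have := hrr
      simp only [ptransl, Option.some.injEq] at this
      exact this
    exact ⟨r, this⟩
  · simp only [not_true_eq_false, iff_false, not_not]
    intro ⟨r, hrr⟩
    exact hcond ⟨r, by simp only [ptransl, Option.some.injEq]; exact hrr⟩


/-- Distinct reduced infinite words in the generators of `R` give
rise to distinct characters: there is a constructible right ideal `A ∈ J(R)` containing
some nonempty prefix product of exactly one of the two words. -/
theorem cstar_stmt14 (w v : ℕ → Gen) (hwv : w ≠ v)
    (hw : ∀ n, ReducedWord (prefixWord w n))
    (hv : ∀ n, ReducedWord (prefixWord v n)) :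
    ∃ A : Set R, IsConstructible A ∧
      Xor' (∃ n : ℕ, 1 ≤ n ∧ qR (prefixWord w n) ∈ A)
           (∃ n : ℕ, 1 ≤ n ∧ qR (prefixWord v n) ∈ A) := by
  have hex : ∃ j, w j ≠ v j := by
    by_contra hc
    push_neg at hc
    exact hwv (funext hc)
  set k := Nat.find hex with hkdef
  have hk : w k ≠ v k := Nat.find_spec hex
  have hagree : prefL w k = prefL v k := by
    apply List.map_congr_left
    intro j hj
    have hjk : j < k := List.mem_range.mp hj
    by_contra hne
    exact (Nat.find_min hex hjk) hne
  by_cases hvb : v k = Gen.b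
  · refine ⟨idealOf (qR (prefixWord v (k + 1))), idealOf_constructible _,
      Or.inr ⟨⟨k + 1, by omega, 1, mul_one _⟩, ?_⟩⟩
    rintro ⟨n, _, hmem⟩
    have hsw : prefixWord v (k + 1) = FreeMonoid.ofList (prefL w k ++ [Gen.b]) := by
      rw [prefixWord_eq, prefL_succ, hagree, hvb]
    refine exclude w hw k Gen.b (by rw [← hsw]; exact hv (k + 1))
      (fun e => hk (e.trans hvb.symm)) (Or.inl rfl) n ?_
    rw [hsw] at hmem
    exact hmem
  · refine ⟨idealOf (qR (prefixWord w (k + 1))), idealOf_constructible _,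
      Or.inl ⟨⟨k + 1, by omega, 1, mul_one _⟩, ?_⟩⟩
    rintro ⟨n, _, hmem⟩
    have hsw : prefixWord w (k + 1) = FreeMonoid.ofList (prefL v k ++ [w k]) := by
      rw [prefixWord_eq, prefL_succ, hagree]
    refine exclude v hv k (w k) (by rw [← hsw]; exact hw (k + 1))
      (fun e => hk e.symm) (Or.inr hvb) n ?_
    rw [hsw] at hmem
    exact hmem

end SgC
end

section
/- The monoid R is not C*-regular. -/
open scoped Classical

namespace SgC

variable {M : Type*}

namespace Aux


/-- absorb/prepend action of generator `a` -/
def actA : List Gen → List Gen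
  | Gen.b :: Gen.x k :: v => Gen.b :: Gen.x k :: v
  | Gen.b :: Gen.y k :: v => Gen.b :: Gen.y (k+1) :: v
  | u => Gen.a :: u

def actC : List Gen → List Gen
  | Gen.b :: Gen.x k :: v => Gen.b :: Gen.x (k+1) :: v
  | Gen.b :: Gen.y k :: v => Gen.b :: Gen.y k :: v
  | u => Gen.c :: u

def actD : List Gen → List Gen
  | Gen.b :: Gen.x k :: z :: v => Gen.b :: Gen.x k :: z :: v
  | u => Gen.d :: u

def actF : List Gen → List Gen
  | Gen.b :: Gen.y k :: z :: v => Gen.b :: Gen.y k :: z :: v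
  | u => Gen.f :: u

def act : Gen → List Gen → List Gen
  | Gen.a => actA
  | Gen.c => actC
  | Gen.d => actD
  | Gen.f => actF
  | g => (g :: ·)

lemma actA_inv (W u : List Gen) (h : actA W = u) :
    (u = Gen.a :: W ∧ (∀ k v, W ≠ Gen.b :: Gen.x k :: v) ∧ (∀ k v, W ≠ Gen.b :: Gen.y k :: v)) ∨
      (∃ k v, W = Gen.b :: Gen.x k :: v ∧ u = W) ∨
      (∃ k v, W = Gen.b :: Gen.y k :: v ∧ u = Gen.b :: Gen.y (k+1) :: v) := by
  unfold actA at h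
  split at h
  · exact Or.inr (Or.inl ⟨_, _, rfl, h.symm⟩)
  · exact Or.inr (Or.inr ⟨_, _, rfl, h.symm⟩)
  · rename_i h1 h2
    exact Or.inl ⟨h.symm, fun k v hw => h1 k v hw, fun k v hw => h2 k v hw⟩

lemma actC_inv (W u : List Gen) (h : actC W = u) :
    (u = Gen.c :: W ∧ (∀ k v, W ≠ Gen.b :: Gen.x k :: v) ∧ (∀ k v, W ≠ Gen.b :: Gen.y k :: v)) ∨
      (∃ k v, W = Gen.b :: Gen.x k :: v ∧ u = Gen.b :: Gen.x (k+1) :: v) ∨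
      (∃ k v, W = Gen.b :: Gen.y k :: v ∧ u = W) := by
  unfold actC at h
  split at h
  · exact Or.inr (Or.inl ⟨_, _, rfl, h.symm⟩)
  · exact Or.inr (Or.inr ⟨_, _, rfl, h.symm⟩)
  · rename_i h1 h2
    exact Or.inl ⟨h.symm, fun k v hw => h1 k v hw, fun k v hw => h2 k v hw⟩

lemma actD_inv (W u : List Gen) (h : actD W = u) :
    (u = Gen.d :: W ∧ (∀ k z v, W ≠ Gen.b :: Gen.x k :: z :: v)) ∨
      (∃ k z v, W = Gen.b :: Gen.x k :: z :: v ∧ u = W) := by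
  unfold actD at h
  split at h
  · exact Or.inr ⟨_, _, _, rfl, h.symm⟩
  · rename_i h1
    exact Or.inl ⟨h.symm, fun k z v hw => h1 k z v hw⟩

lemma actF_inv (W u : List Gen) (h : actF W = u) :
    (u = Gen.f :: W ∧ (∀ k z v, W ≠ Gen.b :: Gen.y k :: z :: v)) ∨
      (∃ k z v, W = Gen.b :: Gen.y k :: z :: v ∧ u = W) := by
  unfold actF at h
  split at h
  · exact Or.inr ⟨_, _, _, rfl, h.symm⟩
  · rename_i h1
    exact Or.inl ⟨h.symm, fun k z v hw => h1 k z v hw⟩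

lemma actA_ne_nil (u : List Gen) : actA u ≠ [] := by unfold actA; split <;> exact List.cons_ne_nil _ _
lemma actC_ne_nil (u : List Gen) : actC u ≠ [] := by unfold actC; split <;> exact List.cons_ne_nil _ _
lemma actD_ne_nil (u : List Gen) : actD u ≠ [] := by unfold actD; split <;> exact List.cons_ne_nil _ _
lemma actF_ne_nil (u : List Gen) : actF u ≠ [] := by unfold actF; split <;> exact List.cons_ne_nil _ _

lemma act_ne_nil (g : Gen) (u : List Gen) : act g u ≠ [] := by
  cases g
  case a => exact actA_ne_nil u
  case c => exact actC_ne_nil u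
  case d => exact actD_ne_nil u
  case f => exact actF_ne_nil u
  all_goals exact List.cons_ne_nil _ _

def unact : Gen → List Gen → List Gen
  | Gen.a, Gen.b :: Gen.x k :: v => Gen.b :: Gen.x k :: v
  | Gen.a, Gen.b :: Gen.y k :: v => Gen.b :: Gen.y (k-1) :: v
  | Gen.c, Gen.b :: Gen.x k :: v => Gen.b :: Gen.x (k-1) :: v
  | Gen.c, Gen.b :: Gen.y k :: v => Gen.b :: Gen.y k :: v
  | Gen.d, Gen.b :: Gen.x k :: z :: v => Gen.b :: Gen.x k :: z :: v
  | Gen.f, Gen.b :: Gen.y k :: z :: v => Gen.b :: Gen.y k :: z :: v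
  | _, w => w.tail

lemma unact_act (g : Gen) (u : List Gen) : unact g (act g u) = u := by
  cases g
  case b => rfl
  case x j => rfl
  case y j => rfl
  case a =>
    show unact Gen.a (actA u) = u
    unfold actA
    split
    · rfl
    · simp [unact]
    · rfl
  case c =>
    show unact Gen.c (actC u) = u
    unfold actC
    split
    · simp [unact]
    · rfl
    · rfl
  case d =>
    show unact Gen.d (actD u) = u
    unfold actD
    split
    · rfl
    · rfl
  case f =>
    show unact Gen.f (actF u) = u
    unfold actF
    split
    · rfl
    · rfl

lemma act_injective (g : Gen) : Function.Injective (act g) :=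
  Function.LeftInverse.injective (unact_act g)


/-- Forward uniformity: acting on `A ++ [ξ k]` is uniform in `k`, with the same
prefix for the `x` and `y` families. -/
lemma keyAct (g : Gen) (A : List Gen) :
    ∃ A' s t, (∀ k : ℤ, act g (A ++ [Gen.x k]) = A' ++ [Gen.x (k+s)]) ∧
      (∀ k : ℤ, act g (A ++ [Gen.y k]) = A' ++ [Gen.y (k+t)]) := by
  have triv : ∀ (g : Gen), (∀ u, act g u = g :: u) →
      ∃ A' s t, (∀ k : ℤ, act g (A ++ [Gen.x k]) = A' ++ [Gen.x (k+s)]) ∧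
      (∀ k : ℤ, act g (A ++ [Gen.y k]) = A' ++ [Gen.y (k+t)]) := by
    intro g hg
    exact ⟨g :: A, 0, 0, fun k => by simp [hg], fun k => by simp [hg]⟩
  have pre : ∀ (g : Gen) (A : List Gen),
      (∀ k : ℤ, act g (A ++ [Gen.x k]) = g :: (A ++ [Gen.x k])) →
      (∀ k : ℤ, act g (A ++ [Gen.y k]) = g :: (A ++ [Gen.y k])) →
      ∃ A' s t, (∀ k : ℤ, act g (A ++ [Gen.x k]) = A' ++ [Gen.x (k+s)]) ∧
        (∀ k : ℤ, act g (A ++ [Gen.y k]) = A' ++ [Gen.y (k+t)]) := by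
    intro g A hx hy
    exact ⟨g :: A, 0, 0, fun k => by rw [hx]; simp, fun k => by rw [hy]; simp⟩
  cases g
  case b => exact triv _ (fun u => rfl)
  case x j => exact triv _ (fun u => rfl)
  case y j => exact triv _ (fun u => rfl)
  case a =>
    rcases A with _ | ⟨g1, A1⟩
    · exact ⟨[Gen.a], 0, 0, fun k => by simp [act, actA], fun k => by simp [act, actA]⟩
    cases g1
    case b =>
      rcases A1 with _ | ⟨g2, A2⟩
      · exact ⟨[Gen.b], 0, 1, fun k => by simp [act, actA], fun k => by simp [act, actA]⟩
      cases g2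
      case x j =>
        exact ⟨Gen.b :: Gen.x j :: A2, 0, 0, fun k => by simp [act, actA],
          fun k => by simp [act, actA]⟩
      case y j =>
        exact ⟨Gen.b :: Gen.y (j+1) :: A2, 0, 0, fun k => by simp [act, actA],
          fun k => by simp [act, actA]⟩
      all_goals exact pre _ _ (fun k => by simp [act, actA]) (fun k => by simp [act, actA])
    all_goals exact pre _ _ (fun k => by simp [act, actA]) (fun k => by simp [act, actA])
  case c =>
    rcases A with _ | ⟨g1, A1⟩
    · exact ⟨[Gen.c], 0, 0, fun k => by simp [act, actC], fun k => by simp [act, actC]⟩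
    cases g1
    case b =>
      rcases A1 with _ | ⟨g2, A2⟩
      · exact ⟨[Gen.b], 1, 0, fun k => by simp [act, actC], fun k => by simp [act, actC]⟩
      cases g2
      case x j =>
        exact ⟨Gen.b :: Gen.x (j+1) :: A2, 0, 0, fun k => by simp [act, actC],
          fun k => by simp [act, actC]⟩
      case y j =>
        exact ⟨Gen.b :: Gen.y j :: A2, 0, 0, fun k => by simp [act, actC],
          fun k => by simp [act, actC]⟩
      all_goals exact pre _ _ (fun k => by simp [act, actC]) (fun k => by simp [act, actC])
    all_goals exact pre _ _ (fun k => by simp [act, actC]) (fun k => by simp [act, actC])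
  case d =>
    rcases A with _ | ⟨g1, A1⟩
    · exact ⟨[Gen.d], 0, 0, fun k => by simp [act, actD], fun k => by simp [act, actD]⟩
    cases g1
    case b =>
      rcases A1 with _ | ⟨g2, A2⟩
      · exact ⟨[Gen.d, Gen.b], 0, 0, fun k => by simp [act, actD], fun k => by simp [act, actD]⟩
      cases g2
      case x j =>
        refine ⟨Gen.b :: Gen.x j :: A2, 0, 0, fun k => ?_, fun k => ?_⟩ <;>
          rcases A2 with _ | ⟨g3, A3⟩ <;> simp [act, actD]
      all_goals exact pre _ _ (fun k => by simp [act, actD]) (fun k => by simp [act, actD])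
    all_goals exact pre _ _ (fun k => by simp [act, actD]) (fun k => by simp [act, actD])
  case f =>
    rcases A with _ | ⟨g1, A1⟩
    · exact ⟨[Gen.f], 0, 0, fun k => by simp [act, actF], fun k => by simp [act, actF]⟩
    cases g1
    case b =>
      rcases A1 with _ | ⟨g2, A2⟩
      · exact ⟨[Gen.f, Gen.b], 0, 0, fun k => by simp [act, actF], fun k => by simp [act, actF]⟩
      cases g2
      case y j =>
        refine ⟨Gen.b :: Gen.y j :: A2, 0, 0, fun k => ?_, fun k => ?_⟩ <;>
          rcases A2 with _ | ⟨g3, A3⟩ <;> simp [act, actF]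
      all_goals exact pre _ _ (fun k => by simp [act, actF]) (fun k => by simp [act, actF])
    all_goals exact pre _ _ (fun k => by simp [act, actF]) (fun k => by simp [act, actF])


lemma finOfEmpty {S : Set ℤ} (h : ∀ k, k ∉ S) : S.Finite :=
  Set.finite_empty.subset fun k hk => absurd hk (h k)

lemma finOfSing {S : Set ℤ} (j : ℤ) (h : ∀ k ∈ S, k = j) : S.Finite :=
  (Set.finite_singleton j).subset fun k hk => h k hk

lemma leftPre (g : Gen) (A' : List Gen)
    (hx : ∀ k : ℤ, act g (A' ++ [Gen.x k]) = g :: (A' ++ [Gen.x k]))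
    (hy : ∀ k : ℤ, act g (A' ++ [Gen.y k]) = g :: (A' ++ [Gen.y k])) :
    ∃ A'' s t, (∀ k : ℤ, act g (A'' ++ [Gen.x (k+s)]) = (g :: A') ++ [Gen.x k]) ∧
      (∀ k : ℤ, act g (A'' ++ [Gen.y (k+t)]) = (g :: A') ++ [Gen.y k]) :=
  ⟨A', 0, 0, fun k => by rw [add_zero, hx]; rfl, fun k => by rw [add_zero, hy]; rfl⟩

/-- Preimage uniformity: preimages of `A ++ [ξ k]` under `act g` are either uniform
in `k` (same prefix for both families) or exist for only finitely many `k`. -/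
lemma keyPre (g : Gen) (A : List Gen) :
    (∃ A' s t, (∀ k : ℤ, act g (A' ++ [Gen.x (k+s)]) = A ++ [Gen.x k]) ∧
      (∀ k : ℤ, act g (A' ++ [Gen.y (k+t)]) = A ++ [Gen.y k])) ∨
    ({k : ℤ | ∃ W, act g W = A ++ [Gen.x k]}.Finite ∧
      {k : ℤ | ∃ W, act g W = A ++ [Gen.y k]}.Finite) := by
  cases g
  case b =>
    rcases A with _ | ⟨g1, A1⟩
    · right
      constructor <;>
        · apply finOfEmpty
          rintro k ⟨W, hW⟩
          simp [act] at hW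
    cases g1
    case b => exact Or.inl (leftPre Gen.b A1 (fun k => rfl) (fun k => rfl))
    all_goals
      (right
       constructor <;>
         · apply finOfEmpty
           rintro k ⟨W, hW⟩
           simp [act] at hW)
  case x j =>
    rcases A with _ | ⟨g1, A1⟩
    · right
      constructor
      · apply finOfSing j
        rintro k ⟨W, hW⟩
        simp [act] at hW
        exact hW.1.symm
      · apply finOfEmpty
        rintro k ⟨W, hW⟩
        simp [act] at hW
    cases g1
    case x j' =>
      by_cases hj : j = j'
      · subst hj
        exact Or.inl (leftPre (Gen.x j) A1 (fun k => rfl) (fun k => rfl))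
      · right
        constructor <;>
          · apply finOfEmpty
            rintro k ⟨W, hW⟩
            simp [act] at hW
            exact hj hW.1
    all_goals
      (right
       constructor <;>
         · apply finOfEmpty
           rintro k ⟨W, hW⟩
           simp [act] at hW)
  case y j =>
    rcases A with _ | ⟨g1, A1⟩
    · right
      constructor
      · apply finOfEmpty
        rintro k ⟨W, hW⟩
        simp [act] at hW
      · apply finOfSing j
        rintro k ⟨W, hW⟩
        simp [act] at hW
        exact hW.1.symm
    cases g1
    case y j' =>
      by_cases hj : j = j'
      · subst hj
        exact Or.inl (leftPre (Gen.y j) A1 (fun k => rfl) (fun k => rfl))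
      · right
        constructor <;>
          · apply finOfEmpty
            rintro k ⟨W, hW⟩
            simp [act] at hW
            exact hj hW.1
    all_goals
      (right
       constructor <;>
         · apply finOfEmpty
           rintro k ⟨W, hW⟩
           simp [act] at hW)
  case a =>
    rcases A with _ | ⟨g1, A1⟩
    · right
      constructor <;>
        · apply finOfEmpty
          rintro k ⟨W, hW⟩
          rcases actA_inv W _ hW with ⟨hu, -, -⟩ | ⟨k', v, hw, hu⟩ | ⟨k', v, hw, hu⟩ <;> simp_all
    cases g1
    case b =>
      rcases A1 with _ | ⟨g2, A2⟩
      · left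
        refine ⟨[Gen.b], 0, -1, fun k => by simp [act, actA], fun k => ?_⟩
        have hk : k + -1 + 1 = k := by ring
        simp [act, actA, hk]
      cases g2
      case x j =>
        exact Or.inl ⟨Gen.b :: Gen.x j :: A2, 0, 0,
          fun k => by simp [act, actA], fun k => by simp [act, actA]⟩
      case y j =>
        left
        refine ⟨Gen.b :: Gen.y (j-1) :: A2, 0, 0, fun k => ?_, fun k => ?_⟩ <;>
          · have hj : j - 1 + 1 = j := by ring
            simp [act, actA, hj]
      all_goals
        (right
         constructor <;>
           · apply finOfEmpty
             rintro k ⟨W, hW⟩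
             rcases actA_inv W _ hW with ⟨hu, -, -⟩ | ⟨k', v, hw, hu⟩ | ⟨k', v, hw, hu⟩ <;> simp_all)
    case a =>
      rcases A1 with _ | ⟨g2, A2⟩
      · exact Or.inl (leftPre Gen.a [] (fun k => rfl) (fun k => rfl))
      cases g2
      case b =>
        rcases A2 with _ | ⟨g3, A3⟩
        · right
          constructor <;>
            · apply finOfEmpty
              rintro k ⟨W, hW⟩
              rcases actA_inv W _ hW with ⟨hu, hx', hy'⟩ | ⟨k', v, hw, hu⟩ | ⟨k', v, hw, hu⟩
              · first
                  | exact hx' k [] (by injection hu with _ h; exact h.symm)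
                  | exact hy' k [] (by injection hu with _ h; exact h.symm)
              all_goals simp_all
        cases g3
        case x j =>
          right
          constructor <;>
            · apply finOfEmpty
              rintro k ⟨W, hW⟩
              rcases actA_inv W _ hW with ⟨hu, hx', hy'⟩ | ⟨k', v, hw, hu⟩ | ⟨k', v, hw, hu⟩
              · exact hx' j (A3 ++ [_]) (by injection hu with _ h; exact h.symm)
              all_goals simp_all
        case y j =>
          right
          constructor <;>
            · apply finOfEmpty
              rintro k ⟨W, hW⟩
              rcases actA_inv W _ hW with ⟨hu, hx', hy'⟩ | ⟨k', v, hw, hu⟩ | ⟨k', v, hw, hu⟩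
              · exact hy' j (A3 ++ [_]) (by injection hu with _ h; exact h.symm)
              all_goals simp_all
        all_goals exact Or.inl (leftPre Gen.a (Gen.b :: _ :: A3)
          (fun k => by simp [act, actA]) (fun k => by simp [act, actA]))
      all_goals exact Or.inl (leftPre Gen.a (_ :: A2)
        (fun k => by simp [act, actA]) (fun k => by simp [act, actA]))
    all_goals
      (right
       constructor <;>
         · apply finOfEmpty
           rintro k ⟨W, hW⟩
           rcases actA_inv W _ hW with ⟨hu, -, -⟩ | ⟨k', v, hw, hu⟩ | ⟨k', v, hw, hu⟩ <;> simp_all)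
  case c =>
    rcases A with _ | ⟨g1, A1⟩
    · right
      constructor <;>
        · apply finOfEmpty
          rintro k ⟨W, hW⟩
          rcases actC_inv W _ hW with ⟨hu, -, -⟩ | ⟨k', v, hw, hu⟩ | ⟨k', v, hw, hu⟩ <;> simp_all
    cases g1
    case b =>
      rcases A1 with _ | ⟨g2, A2⟩
      · left
        refine ⟨[Gen.b], -1, 0, fun k => ?_, fun k => by simp [act, actC]⟩
        have hk : k + -1 + 1 = k := by ring
        simp [act, actC, hk]
      cases g2
      case y j =>
        exact Or.inl ⟨Gen.b :: Gen.y j :: A2, 0, 0,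
          fun k => by simp [act, actC], fun k => by simp [act, actC]⟩
      case x j =>
        left
        refine ⟨Gen.b :: Gen.x (j-1) :: A2, 0, 0, fun k => ?_, fun k => ?_⟩ <;>
          · have hj : j - 1 + 1 = j := by ring
            simp [act, actC, hj]
      all_goals
        (right
         constructor <;>
           · apply finOfEmpty
             rintro k ⟨W, hW⟩
             rcases actC_inv W _ hW with ⟨hu, -, -⟩ | ⟨k', v, hw, hu⟩ | ⟨k', v, hw, hu⟩ <;> simp_all)
    case c =>
      rcases A1 with _ | ⟨g2, A2⟩
      · exact Or.inl (leftPre Gen.c [] (fun k => rfl) (fun k => rfl))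
      cases g2
      case b =>
        rcases A2 with _ | ⟨g3, A3⟩
        · right
          constructor <;>
            · apply finOfEmpty
              rintro k ⟨W, hW⟩
              rcases actC_inv W _ hW with ⟨hu, hx', hy'⟩ | ⟨k', v, hw, hu⟩ | ⟨k', v, hw, hu⟩
              · first
                  | exact hx' k [] (by injection hu with _ h; exact h.symm)
                  | exact hy' k [] (by injection hu with _ h; exact h.symm)
              all_goals simp_all
        cases g3
        case x j =>
          right
          constructor <;>
            · apply finOfEmpty
              rintro k ⟨W, hW⟩
              rcases actC_inv W _ hW with ⟨hu, hx', hy'⟩ | ⟨k', v, hw, hu⟩ | ⟨k', v, hw, hu⟩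
              · exact hx' j (A3 ++ [_]) (by injection hu with _ h; exact h.symm)
              all_goals simp_all
        case y j =>
          right
          constructor <;>
            · apply finOfEmpty
              rintro k ⟨W, hW⟩
              rcases actC_inv W _ hW with ⟨hu, hx', hy'⟩ | ⟨k', v, hw, hu⟩ | ⟨k', v, hw, hu⟩
              · exact hy' j (A3 ++ [_]) (by injection hu with _ h; exact h.symm)
              all_goals simp_all
        all_goals exact Or.inl (leftPre Gen.c (Gen.b :: _ :: A3)
          (fun k => by simp [act, actC]) (fun k => by simp [act, actC]))
      all_goals exact Or.inl (leftPre Gen.c (_ :: A2)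
        (fun k => by simp [act, actC]) (fun k => by simp [act, actC]))
    all_goals
      (right
       constructor <;>
         · apply finOfEmpty
           rintro k ⟨W, hW⟩
           rcases actC_inv W _ hW with ⟨hu, -, -⟩ | ⟨k', v, hw, hu⟩ | ⟨k', v, hw, hu⟩ <;> simp_all)
  case d =>
    rcases A with _ | ⟨g1, A1⟩
    · right
      constructor <;>
        · apply finOfEmpty
          rintro k ⟨W, hW⟩
          rcases actD_inv W _ hW with ⟨hu, -⟩ | ⟨k', z, v, hw, hu⟩ <;> simp_all
    cases g1
    case b =>
      rcases A1 with _ | ⟨g2, A2⟩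
      · right
        constructor <;>
          · apply finOfEmpty
            rintro k ⟨W, hW⟩
            rcases actD_inv W _ hW with ⟨hu, -⟩ | ⟨k', z, v, hw, hu⟩ <;> simp_all
      cases g2
      case x j =>
        left
        refine ⟨Gen.b :: Gen.x j :: A2, 0, 0, fun k => ?_, fun k => ?_⟩ <;>
          rcases A2 with _ | ⟨g3, A3⟩ <;> simp [act, actD]
      all_goals
        (right
         constructor <;>
           · apply finOfEmpty
             rintro k ⟨W, hW⟩
             rcases actD_inv W _ hW with ⟨hu, -⟩ | ⟨k', z, v, hw, hu⟩ <;> simp_all)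
    case d =>
      rcases A1 with _ | ⟨g2, A2⟩
      · exact Or.inl (leftPre Gen.d [] (fun k => rfl) (fun k => rfl))
      cases g2
      case b =>
        rcases A2 with _ | ⟨g3, A3⟩
        · exact Or.inl (leftPre Gen.d [Gen.b]
            (fun k => by simp [act, actD]) (fun k => by simp [act, actD]))
        cases g3
        case x j =>
          right
          constructor <;>
            · apply finOfEmpty
              rintro k ⟨W, hW⟩
              rcases actD_inv W _ hW with ⟨hu, hx'⟩ | ⟨k', z, v, hw, hu⟩
              · rcases A3 with _ | ⟨g4, A4⟩
                · exact hx' j _ [] (by injection hu with _ h; exact h.symm)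
                · exact hx' j g4 (A4 ++ [_]) (by injection hu with _ h; exact h.symm)
              · simp_all
        all_goals exact Or.inl (leftPre Gen.d (Gen.b :: _ :: A3)
          (fun k => by simp [act, actD]) (fun k => by simp [act, actD]))
      all_goals exact Or.inl (leftPre Gen.d (_ :: A2)
        (fun k => by simp [act, actD]) (fun k => by simp [act, actD]))
    all_goals
      (right
       constructor <;>
         · apply finOfEmpty
           rintro k ⟨W, hW⟩
           rcases actD_inv W _ hW with ⟨hu, -⟩ | ⟨k', z, v, hw, hu⟩ <;> simp_all)
  case f =>
    rcases A with _ | ⟨g1, A1⟩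
    · right
      constructor <;>
        · apply finOfEmpty
          rintro k ⟨W, hW⟩
          rcases actF_inv W _ hW with ⟨hu, -⟩ | ⟨k', z, v, hw, hu⟩ <;> simp_all
    cases g1
    case b =>
      rcases A1 with _ | ⟨g2, A2⟩
      · right
        constructor <;>
          · apply finOfEmpty
            rintro k ⟨W, hW⟩
            rcases actF_inv W _ hW with ⟨hu, -⟩ | ⟨k', z, v, hw, hu⟩ <;> simp_all
      cases g2
      case y j =>
        left
        refine ⟨Gen.b :: Gen.y j :: A2, 0, 0, fun k => ?_, fun k => ?_⟩ <;>
          rcases A2 with _ | ⟨g3, A3⟩ <;> simp [act, actF]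
      all_goals
        (right
         constructor <;>
           · apply finOfEmpty
             rintro k ⟨W, hW⟩
             rcases actF_inv W _ hW with ⟨hu, -⟩ | ⟨k', z, v, hw, hu⟩ <;> simp_all)
    case f =>
      rcases A1 with _ | ⟨g2, A2⟩
      · exact Or.inl (leftPre Gen.f [] (fun k => rfl) (fun k => rfl))
      cases g2
      case b =>
        rcases A2 with _ | ⟨g3, A3⟩
        · exact Or.inl (leftPre Gen.f [Gen.b]
            (fun k => by simp [act, actF]) (fun k => by simp [act, actF]))
        cases g3
        case y j =>
          right
          constructor <;>
            · apply finOfEmpty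
              rintro k ⟨W, hW⟩
              rcases actF_inv W _ hW with ⟨hu, hy'⟩ | ⟨k', z, v, hw, hu⟩
              · rcases A3 with _ | ⟨g4, A4⟩
                · exact hy' j _ [] (by injection hu with _ h; exact h.symm)
                · exact hy' j g4 (A4 ++ [_]) (by injection hu with _ h; exact h.symm)
              · simp_all
        all_goals exact Or.inl (leftPre Gen.f (Gen.b :: _ :: A3)
          (fun k => by simp [act, actF]) (fun k => by simp [act, actF]))
      all_goals exact Or.inl (leftPre Gen.f (_ :: A2)
        (fun k => by simp [act, actF]) (fun k => by simp [act, actF]))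
    all_goals
      (right
       constructor <;>
         · apply finOfEmpty
           rintro k ⟨W, hW⟩
           rcases actF_inv W _ hW with ⟨hu, -⟩ | ⟨k', z, v, hw, hu⟩ <;> simp_all)


/-- Action of a word (left letter acts last). -/
def PhiL : List Gen → List Gen → List Gen
  | [], u => u
  | g :: w, u => act g (PhiL w u)

lemma PhiL_injective (w : List Gen) : Function.Injective (PhiL w) := by
  induction w with
  | nil => exact fun u v h => h
  | cons g w ih => exact fun u v h => ih (act_injective g h)

lemma keyPhiL (w : List Gen) (A : List Gen) :
    ∃ A' s t, (∀ k : ℤ, PhiL w (A ++ [Gen.x k]) = A' ++ [Gen.x (k+s)]) ∧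
      (∀ k : ℤ, PhiL w (A ++ [Gen.y k]) = A' ++ [Gen.y (k+t)]) := by
  induction w with
  | nil => exact ⟨A, 0, 0, fun k => by simp [PhiL], fun k => by simp [PhiL]⟩
  | cons g w ih =>
    obtain ⟨A1, s1, t1, hx1, hy1⟩ := ih
    obtain ⟨A2, s2, t2, hx2, hy2⟩ := keyAct g A1
    refine ⟨A2, s1 + s2, t1 + t2, fun k => ?_, fun k => ?_⟩
    · show act g (PhiL w (A ++ [Gen.x k])) = _
      rw [hx1 k, hx2 (k + s1), add_assoc]
    · show act g (PhiL w (A ++ [Gen.y k])) = _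
      rw [hy1 k, hy2 (k + t1), add_assoc]

/-- Solvability of `PhiL w U = A ++ [ξ k]`: uniform in `k` or finite. -/
lemma solL (w : List Gen) (A : List Gen) :
    (∃ A' s t, (∀ k : ℤ, PhiL w (A' ++ [Gen.x (k+s)]) = A ++ [Gen.x k]) ∧
      (∀ k : ℤ, PhiL w (A' ++ [Gen.y (k+t)]) = A ++ [Gen.y k])) ∨
    ({k : ℤ | ∃ U, PhiL w U = A ++ [Gen.x k]}.Finite ∧
      {k : ℤ | ∃ U, PhiL w U = A ++ [Gen.y k]}.Finite) := by
  induction w generalizing A with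
  | nil => exact Or.inl ⟨A, 0, 0, fun k => by simp [PhiL], fun k => by simp [PhiL]⟩
  | cons g w ih =>
    rcases keyPre g A with ⟨A0, s0, t0, hx0, hy0⟩ | ⟨hfx, hfy⟩
    · rcases ih A0 with ⟨A', s', t', hx', hy'⟩ | ⟨hfx', hfy'⟩
      · left
        refine ⟨A', s0 + s', t0 + t', fun k => ?_, fun k => ?_⟩
        · show act g (PhiL w (A' ++ [Gen.x (k + (s0 + s'))])) = _
          rw [show k + (s0 + s') = (k + s0) + s' by ring, hx' (k + s0), hx0 k]
        · show act g (PhiL w (A' ++ [Gen.y (k + (t0 + t'))])) = _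
          rw [show k + (t0 + t') = (k + t0) + t' by ring, hy' (k + t0), hy0 k]
      · right
        constructor
        · apply Set.Finite.subset (hfx'.preimage (f := fun k : ℤ => k + s0)
            ((add_left_injective s0).injOn))
          rintro k ⟨U, hU⟩
          refine ⟨U, act_injective g ?_⟩
          rw [show act g (PhiL w U) = PhiL (g :: w) U from rfl, hU, ← hx0 k]
        · apply Set.Finite.subset (hfy'.preimage (f := fun k : ℤ => k + t0)
            ((add_left_injective t0).injOn))
          rintro k ⟨U, hU⟩
          refine ⟨U, act_injective g ?_⟩
          rw [show act g (PhiL w U) = PhiL (g :: w) U from rfl, hU, ← hy0 k]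
    · right
      constructor
      · exact hfx.subset fun k ⟨U, hU⟩ => ⟨PhiL w U, hU⟩
      · exact hfy.subset fun k ⟨U, hU⟩ => ⟨PhiL w U, hU⟩


/-! ### Bridge to `R` -/

def PhiM : FreeMonoid Gen →* Function.End (List Gen) :=
  FreeMonoid.lift (fun g => (act g : Function.End (List Gen)))

lemma PhiM_of_apply (g : Gen) (w : FreeMonoid Gen) (u : List Gen) :
    PhiM (FreeMonoid.of g * w) u = act g (PhiM w u) := by
  rw [map_mul]; rfl

lemma PhiM_apply (w : FreeMonoid Gen) (u : List Gen) : PhiM w u = PhiL w.toList u := by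
  induction w using FreeMonoid.recOn with
  | one => rfl
  | of_mul g w ih => rw [PhiM_of_apply, ih]; rfl

lemma actD_abs (k : ℤ) (v : List Gen) (hv : v ≠ []) :
    actD (Gen.b :: Gen.x k :: v) = Gen.b :: Gen.x k :: v := by
  cases v with
  | nil => exact absurd rfl hv
  | cons z v => rfl

lemma actF_abs (k : ℤ) (v : List Gen) (hv : v ≠ []) :
    actF (Gen.b :: Gen.y k :: v) = Gen.b :: Gen.y k :: v := by
  cases v with
  | nil => exact absurd rfl hv
  | cons z v => rfl

lemma ker_le : conGen RRel ≤ Con.ker PhiM := by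
  apply Con.conGen_le.mpr
  intro u v huv
  rw [Con.ker_rel]
  have key : ∀ u₁ u₂ : FreeMonoid Gen, (∀ w : List Gen, PhiM u₁ w = PhiM u₂ w) → PhiM u₁ = PhiM u₂ :=
    fun u₁ u₂ h => funext h
  cases huv with
  | abx n => exact key _ _ fun w => rfl
  | aby n => exact key _ _ fun w => rfl
  | cbx n => exact key _ _ fun w => rfl
  | cby n => exact key _ _ fun w => rfl
  | dbx n z =>
    refine key _ _ fun w => ?_
    show act Gen.d (act Gen.b (act (Gen.x n) (PhiM (FreeMonoid.of z) w))) =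
      act Gen.b (act (Gen.x n) (PhiM (FreeMonoid.of z) w))
    show actD (Gen.b :: Gen.x n :: (PhiM (FreeMonoid.of z) w)) = _
    have hz : PhiM (FreeMonoid.of z) w = act z w := rfl
    rw [hz, actD_abs _ _ (act_ne_nil z w)]
    rfl
  | fby n z =>
    refine key _ _ fun w => ?_
    show act Gen.f (act Gen.b (act (Gen.y n) (PhiM (FreeMonoid.of z) w))) =
      act Gen.b (act (Gen.y n) (PhiM (FreeMonoid.of z) w))
    show actF (Gen.b :: Gen.y n :: (PhiM (FreeMonoid.of z) w)) = _
    have hz : PhiM (FreeMonoid.of z) w = act z w := rfl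
    rw [hz, actF_abs _ _ (act_ne_nil z w)]
    rfl

noncomputable def PsiHom : R →* Function.End (List Gen) := Con.lift _ PhiM ker_le

noncomputable def Psi (r : R) : List Gen → List Gen := PsiHom r

lemma Psi_mk (w : FreeMonoid Gen) : Psi (qR w) = PhiM w := Con.lift_mk' ker_le w

lemma Psi_ofList (w : List Gen) (u : List Gen) :
    Psi (qR (FreeMonoid.ofList w)) u = PhiL w u := by
  rw [Psi_mk, PhiM_apply]; rfl

lemma Psi_mul (r r' : R) (u : List Gen) : Psi (r * r') u = Psi r (Psi r' u) := by
  show PsiHom (r * r') u = _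
  rw [map_mul]; rfl

noncomputable def nf (r : R) : List Gen := Psi r []

lemma nf_mul (r r' : R) : nf (r * r') = Psi r (nf r') := Psi_mul r r' []

lemma exists_rep (r : R) : ∃ w : List Gen, r = qR (FreeMonoid.ofList w) := by
  obtain ⟨w, hw⟩ := Con.mk'_surjective (c := conGen RRel) r
  exact ⟨w.toList, by rw [← hw]; rfl⟩

lemma Psi_injective (r : R) : Function.Injective (Psi r) := by
  obtain ⟨w, rfl⟩ := exists_rep r
  intro u v huv
  rw [Psi_ofList, Psi_ofList] at huv
  exact PhiL_injective w huv

lemma qR_act (g : Gen) (u : List Gen) :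
    qR (FreeMonoid.ofList (act g u)) = gen g * qR (FreeMonoid.ofList u) := by
  have con_eq : ∀ u₁ u₂ : FreeMonoid Gen, (conGen RRel) u₁ u₂ → qR u₁ = qR u₂ :=
    fun u₁ u₂ h => (Con.eq _).mpr h
  have hmul : ∀ (g : Gen) (v : List Gen),
      qR (FreeMonoid.ofList (g :: v)) = gen g * qR (FreeMonoid.ofList v) := by
    intro g v
    show qR (FreeMonoid.of g * FreeMonoid.ofList v) = _
    rw [map_mul]; rfl
  cases g
  case b => exact hmul _ _
  case x j => exact hmul _ _
  case y j => exact hmul _ _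
  case a =>
    show qR (FreeMonoid.ofList (actA u)) = _
    unfold actA
    split
    · rename_i k v
      rw [hmul]
      exact (con_eq _ _ (Con.mul _ (ConGen.Rel.of _ _ (RRel.abx k)) ((conGen RRel).refl
        (FreeMonoid.ofList v)))).symm
    · rename_i k v
      rw [hmul]
      exact (con_eq _ _ (Con.mul _ (ConGen.Rel.of _ _ (RRel.aby k)) ((conGen RRel).refl
        (FreeMonoid.ofList v)))).symm
    · exact hmul _ _
  case c =>
    show qR (FreeMonoid.ofList (actC u)) = _
    unfold actC
    split
    · rename_i k v
      rw [hmul]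
      exact (con_eq _ _ (Con.mul _ (ConGen.Rel.of _ _ (RRel.cbx k)) ((conGen RRel).refl
        (FreeMonoid.ofList v)))).symm
    · rename_i k v
      rw [hmul]
      exact (con_eq _ _ (Con.mul _ (ConGen.Rel.of _ _ (RRel.cby k)) ((conGen RRel).refl
        (FreeMonoid.ofList v)))).symm
    · exact hmul _ _
  case d =>
    show qR (FreeMonoid.ofList (actD u)) = _
    unfold actD
    split
    · rename_i k z v
      rw [hmul]
      exact (con_eq _ _ (Con.mul _ (ConGen.Rel.of _ _ (RRel.dbx k z)) ((conGen RRel).refl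
        (FreeMonoid.ofList v)))).symm
    · exact hmul _ _
  case f =>
    show qR (FreeMonoid.ofList (actF u)) = _
    unfold actF
    split
    · rename_i k z v
      rw [hmul]
      exact (con_eq _ _ (Con.mul _ (ConGen.Rel.of _ _ (RRel.fby k z)) ((conGen RRel).refl
        (FreeMonoid.ofList v)))).symm
    · exact hmul _ _

lemma qR_PhiL (w u : List Gen) :
    qR (FreeMonoid.ofList (PhiL w u)) = qR (FreeMonoid.ofList w) * qR (FreeMonoid.ofList u) := by
  induction w with
  | nil =>
    show qR (FreeMonoid.ofList u) = qR 1 * qR (FreeMonoid.ofList u)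
    rw [map_one, one_mul]
  | cons g w ih =>
    show qR (FreeMonoid.ofList (act g (PhiL w u))) = _
    rw [qR_act, ih]
    show _ = qR (FreeMonoid.of g * FreeMonoid.ofList w) * _
    rw [map_mul, mul_assoc]
    rfl

lemma qR_Psi (r : R) (u : List Gen) :
    qR (FreeMonoid.ofList (Psi r u)) = r * qR (FreeMonoid.ofList u) := by
  obtain ⟨w, rfl⟩ := exists_rep r
  rw [show Psi (qR (FreeMonoid.ofList w)) u = PhiL w u from Psi_ofList w u, qR_PhiL]

lemma qR_nf (r : R) : qR (FreeMonoid.ofList (nf r)) = r := by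
  have h := qR_Psi r []
  rw [show (FreeMonoid.ofList [] : FreeMonoid Gen) = 1 from rfl, map_one, mul_one] at h
  exact h

lemma nf_injective {r r' : R} (h : nf r = nf r') : r = r' := by
  rw [← qR_nf r, ← qR_nf r', h]

lemma mul_left_cancelR {r u v : R} (h : r * u = r * v) : u = v := by
  apply nf_injective
  apply Psi_injective r
  rw [← nf_mul, ← nf_mul, h]

lemma pinv_ptransl_some {r t u : R} : pinv (ptransl r) t = some u ↔ r * u = t := by
  constructor
  · intro h
    by_cases hex : ∃ s : R, ptransl r s = some t
    · have hspec : r * hex.choose = t := Option.some_injective _ hex.choose_spec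
      have : pinv (ptransl r) t = some hex.choose := dif_pos hex
      rw [this] at h
      obtain rfl := Option.some_injective _ h
      exact hspec
    · rw [show pinv (ptransl r) t = none from dif_neg hex] at h
      exact absurd h (by simp)
  · intro h
    have hex : ∃ s : R, ptransl r s = some t := ⟨u, by rw [← h]; rfl⟩
    have hspec : r * hex.choose = t := Option.some_injective _ hex.choose_spec
    rw [show pinv (ptransl r) t = some hex.choose from dif_pos hex]
    rw [mul_left_cancelR (hspec.trans h.symm)]

lemma pinv_ptransl_none {r t : R} : pinv (ptransl r) t = none ↔ ¬∃ u, r * u = t := by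
  constructor
  · rintro h ⟨u, hu⟩
    rw [pinv_ptransl_some.mpr hu] at h
    exact absurd h (by simp)
  · intro h
    refine dif_neg fun hex => h ?_
    obtain ⟨s, hs⟩ := hex
    exact ⟨s, Option.some_injective _ hs⟩

lemma pblock_apply (p q s : R) : pblock (p, q) s = pinv (ptransl q) (p * s) := rfl

/-- membership in a principal right ideal, in terms of word solvability -/
lemma mem_ideal_iff (q t : R) (wq : List Gen) (hq : q = qR (FreeMonoid.ofList wq)) :
    (∃ u, q * u = t) ↔ ∃ U : List Gen, PhiL wq U = nf t := by
  constructor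
  · rintro ⟨u, rfl⟩
    refine ⟨nf u, ?_⟩
    rw [← Psi_ofList wq (nf u), ← hq, ← nf_mul]
  · rintro ⟨U, hU⟩
    refine ⟨qR (FreeMonoid.ofList U), ?_⟩
    rw [hq, ← qR_PhiL, hU, qR_nf]

/-! ### Level-two points and the dichotomy for constructible ideals -/

noncomputable def bx (n : ℤ) : R := qR (FreeMonoid.ofList [Gen.b, Gen.x n])
noncomputable def bY (m : ℤ) : R := qR (FreeMonoid.ofList [Gen.b, Gen.y m])

lemma nf_bx (n : ℤ) : nf (bx n) = [Gen.b, Gen.x n] := Psi_ofList _ []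
lemma nf_bY (m : ℤ) : nf (bY m) = [Gen.b, Gen.y m] := Psi_ofList _ []

def GoodFun (h : R → Option R) : Prop :=
  ({n : ℤ | h (bx n) ≠ none}.Finite ∧ {m : ℤ | h (bY m) ≠ none}.Finite) ∨
  ∃ (A : List Gen) (s t : ℤ) (Fx Fy : Set ℤ), Fx.Finite ∧ Fy.Finite ∧
    (∀ n : ℤ, n ∉ Fx → ∃ e, h (bx n) = some e ∧ nf e = A ++ [Gen.x (n+s)]) ∧
    (∀ m : ℤ, m ∉ Fy → ∃ e, h (bY m) = some e ∧ nf e = A ++ [Gen.y (m+t)])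

lemma goodFun_pid : GoodFun (pid : R → Option R) :=
  Or.inr ⟨[Gen.b], 0, 0, ∅, ∅, Set.finite_empty, Set.finite_empty,
    fun n _ => ⟨bx n, rfl, by rw [nf_bx]; simp⟩,
    fun m _ => ⟨bY m, rfl, by rw [nf_bY]; simp⟩⟩

lemma goodFun_step (pq : R × R) (h : R → Option R) (hg : GoodFun h) :
    GoodFun (pcomp (pblock pq) h) := by
  obtain ⟨p, q⟩ := pq
  obtain ⟨wp, hwp⟩ := exists_rep p
  obtain ⟨wq, hwq⟩ := exists_rep q
  rcases hg with ⟨hfx, hfy⟩ | ⟨A, s, t, Fx, Fy, hFx, hFy, hX, hY⟩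
  · left
    constructor
    · refine hfx.subset fun n hn => ?_
      simp only [Set.mem_setOf_eq] at hn ⊢
      intro hnone
      exact hn (by simp [pcomp, hnone])
    · refine hfy.subset fun m hm => ?_
      simp only [Set.mem_setOf_eq] at hm ⊢
      intro hnone
      exact hm (by simp [pcomp, hnone])
  · obtain ⟨A1, s1, t1, hPx, hPy⟩ := keyPhiL wp A
    rcases solL wq A1 with ⟨A2, s2, t2, hSx, hSy⟩ | ⟨hfx2, hfy2⟩
    · right
      refine ⟨A2, s + s1 + s2, t + t1 + t2, Fx, Fy, hFx, hFy, fun n hn => ?_, fun m hm => ?_⟩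
      · obtain ⟨e, he, hnfe⟩ := hX n hn
        have hnfpe : nf (p * e) = A1 ++ [Gen.x (n + s + s1)] := by
          rw [nf_mul, hwp, Psi_ofList, hnfe, hPx (n + s)]
        set K := n + s + s1 with hK
        have hPhiU : PhiL wq (A2 ++ [Gen.x (K + s2)]) = A1 ++ [Gen.x K] := hSx K
        have hqu : q * qR (FreeMonoid.ofList (A2 ++ [Gen.x (K + s2)])) = p * e := by
          rw [hwq, ← qR_PhiL, hPhiU, ← hnfpe, qR_nf]
        refine ⟨qR (FreeMonoid.ofList (A2 ++ [Gen.x (K + s2)])), ?_, ?_⟩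
        · show (h (bx n)).bind (pblock (p, q)) = _
          rw [he]
          show pblock (p, q) e = _
          rw [pblock_apply, pinv_ptransl_some.mpr hqu]
        · have h1 : Psi q (nf (qR (FreeMonoid.ofList (A2 ++ [Gen.x (K + s2)])))) =
              Psi q (A2 ++ [Gen.x (K + s2)]) := by
            rw [← nf_mul, hqu, hnfpe, hwq, Psi_ofList, hPhiU]
          rw [Psi_injective q h1, show K + s2 = n + (s + s1 + s2) by rw [hK]; ring]
      · obtain ⟨e, he, hnfe⟩ := hY m hm
        have hnfpe : nf (p * e) = A1 ++ [Gen.y (m + t + t1)] := by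
          rw [nf_mul, hwp, Psi_ofList, hnfe, hPy (m + t)]
        set K := m + t + t1 with hK
        have hPhiU : PhiL wq (A2 ++ [Gen.y (K + t2)]) = A1 ++ [Gen.y K] := hSy K
        have hqu : q * qR (FreeMonoid.ofList (A2 ++ [Gen.y (K + t2)])) = p * e := by
          rw [hwq, ← qR_PhiL, hPhiU, ← hnfpe, qR_nf]
        refine ⟨qR (FreeMonoid.ofList (A2 ++ [Gen.y (K + t2)])), ?_, ?_⟩
        · show (h (bY m)).bind (pblock (p, q)) = _
          rw [he]
          show pblock (p, q) e = _
          rw [pblock_apply, pinv_ptransl_some.mpr hqu]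
        · have h1 : Psi q (nf (qR (FreeMonoid.ofList (A2 ++ [Gen.y (K + t2)])))) =
              Psi q (A2 ++ [Gen.y (K + t2)]) := by
            rw [← nf_mul, hqu, hnfpe, hwq, Psi_ofList, hPhiU]
          rw [Psi_injective q h1, show K + t2 = m + (t + t1 + t2) by rw [hK]; ring]
    · left
      constructor
      · apply Set.Finite.subset (hFx.union (hfx2.preimage (f := fun k : ℤ => k + (s + s1))
          ((add_left_injective (s + s1)).injOn)))
        intro n hn
        by_cases hnFx : n ∈ Fx
        · exact Or.inl hnFx
        refine Or.inr ?_
        obtain ⟨e, he, hnfe⟩ := hX n hnFx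
        have hnfpe : nf (p * e) = A1 ++ [Gen.x (n + s + s1)] := by
          rw [nf_mul, hwp, Psi_ofList, hnfe, hPx (n + s)]
        simp only [Set.mem_setOf_eq] at hn
        rw [show pcomp (pblock (p, q)) h (bx n) = (h (bx n)).bind (pblock (p, q)) from rfl,
          he] at hn
        have hex : ∃ u, q * u = p * e := by
          by_contra hnex
          exact hn (by rw [show (some e).bind (pblock (p, q)) = pblock (p, q) e from rfl,
            pblock_apply, pinv_ptransl_none.mpr hnex])
        obtain ⟨U, hU⟩ := (mem_ideal_iff q (p * e) wq hwq).mp hex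
        rw [hnfpe] at hU
        show n + (s + s1) ∈ {k : ℤ | ∃ U, PhiL wq U = A1 ++ [Gen.x k]}
        exact ⟨U, by rw [show n + (s + s1) = n + s + s1 by ring]; exact hU⟩
      · apply Set.Finite.subset (hFy.union (hfy2.preimage (f := fun k : ℤ => k + (t + t1))
          ((add_left_injective (t + t1)).injOn)))
        intro m hm
        by_cases hmFy : m ∈ Fy
        · exact Or.inl hmFy
        refine Or.inr ?_
        obtain ⟨e, he, hnfe⟩ := hY m hmFy
        have hnfpe : nf (p * e) = A1 ++ [Gen.y (m + t + t1)] := by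
          rw [nf_mul, hwp, Psi_ofList, hnfe, hPy (m + t)]
        simp only [Set.mem_setOf_eq] at hm
        rw [show pcomp (pblock (p, q)) h (bY m) = (h (bY m)).bind (pblock (p, q)) from rfl,
          he] at hm
        have hex : ∃ u, q * u = p * e := by
          by_contra hnex
          exact hm (by rw [show (some e).bind (pblock (p, q)) = pblock (p, q) e from rfl,
            pblock_apply, pinv_ptransl_none.mpr hnex])
        obtain ⟨U, hU⟩ := (mem_ideal_iff q (p * e) wq hwq).mp hex
        rw [hnfpe] at hU
        show m + (t + t1) ∈ {k : ℤ | ∃ U, PhiL wq U = A1 ++ [Gen.y k]}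
        exact ⟨U, by rw [show m + (t + t1) = m + t + t1 by ring]; exact hU⟩

lemma goodFun_foldl (l : List (R × R)) (acc : R → Option R) (hacc : GoodFun acc) :
    GoodFun (l.foldl (fun acc p => pcomp (pblock p) acc) acc) := by
  induction l generalizing acc with
  | nil => exact hacc
  | cons pq l ih => exact ih _ (goodFun_step pq acc hacc)

/-- The dichotomy for constructible right ideals of `R`. -/
lemma crux {Z : Set R} (hZ : IsConstructible Z) :
    ({n : ℤ | bx n ∈ Z}.Finite ∧ {m : ℤ | bY m ∈ Z}.Finite) ∨
    ({n : ℤ | bx n ∉ Z}.Finite ∧ {m : ℤ | bY m ∉ Z}.Finite) := by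
  obtain ⟨h, ⟨l, _hl, hfold⟩, hZeq⟩ := hZ
  subst hfold
  have hg := goodFun_foldl l pid goodFun_pid
  subst hZeq
  rcases hg with ⟨h1, h2⟩ | ⟨A, s, t, Fx, Fy, hFx, hFy, hX, hY⟩
  · left
    constructor
    · exact h1.subset fun n hn => by simpa [pdom] using hn
    · exact h2.subset fun m hm => by simpa [pdom] using hm
  · right
    constructor
    · refine hFx.subset fun n hn => ?_
      by_contra hnn
      obtain ⟨e, he, -⟩ := hX n hnn
      exact hn (by simp [pdom, he])
    · refine hFy.subset fun m hm => ?_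
      by_contra hmm
      obtain ⟨e, he, -⟩ := hY m hmm
      exact hm (by simp [pdom, he])

/-! ### The witnessing instance -/

noncomputable def ab : R := gen Gen.a * gen Gen.b
noncomputable def cb : R := gen Gen.c * gen Gen.b

lemma hab : ab = qR (FreeMonoid.ofList [Gen.a, Gen.b]) := (map_mul qR _ _).symm
lemma hcb : cb = qR (FreeMonoid.ofList [Gen.c, Gen.b]) := (map_mul qR _ _).symm

lemma Psi_gen (g : Gen) (u : List Gen) : Psi (gen g) u = act g u := Psi_ofList [g] u

noncomputable def h0 : R → Option R :=
  [((1:R), ab), (ab, cb), (cb, (1:R))].foldl (fun acc p => pcomp (pblock p) acc) pid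

noncomputable def XX : Set R := pdom h0

lemma h0_hull : InInvHull h0 := ⟨[((1:R), ab), (ab, cb), (cb, (1:R))], by simp, rfl⟩

lemma XX_bar : IsConstructibleBar XX :=
  ⟨XX, 0, Fin.elim0, ⟨h0, h0_hull, rfl⟩, fun i => i.elim0, by simp⟩

lemma h0_apply (st : R) :
    h0 st = ((pinv (ptransl ab) st).bind (fun t => pinv (ptransl cb) (ab * t))).bind
      (fun t => pinv (ptransl (1:R)) (cb * t)) := by
  show (((pid st).bind (pblock ((1:R), ab))).bind (pblock (ab, cb))).bind
      (pblock (cb, (1:R))) = _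
  have h1 : (pid st).bind (pblock ((1:R), ab)) = pinv (ptransl ab) st := by
    show pblock ((1:R), ab) st = _
    rw [pblock_apply, one_mul]
  rw [h1]
  rfl

lemma mem_XX_iff (st : R) : st ∈ XX ↔ (∃ u, ab * u = st) ∧ (∃ u, cb * u = st) := by
  constructor
  · intro hs
    have hs' : h0 st ≠ none := hs
    rw [h0_apply] at hs'
    by_cases h1 : ∃ u, ab * u = st
    · refine ⟨h1, ?_⟩
      obtain ⟨u1, hu1⟩ := h1
      rw [pinv_ptransl_some.mpr hu1] at hs'
      by_cases h2 : ∃ u, cb * u = st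
      · exact h2
      · rw [show ((some u1).bind fun t => pinv (ptransl cb) (ab * t))
            = pinv (ptransl cb) (ab * u1) from rfl, hu1, pinv_ptransl_none.mpr h2] at hs'
        exact absurd rfl hs'
    · rw [pinv_ptransl_none.mpr h1] at hs'
      exact absurd rfl hs'
  · rintro ⟨⟨u1, hu1⟩, ⟨u2, hu2⟩⟩
    show h0 st ≠ none
    rw [h0_apply, pinv_ptransl_some.mpr hu1,
      show ((some u1).bind fun t => pinv (ptransl cb) (ab * t))
        = pinv (ptransl cb) (ab * u1) from rfl, hu1, pinv_ptransl_some.mpr hu2,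
      show ((some u2).bind fun t => pinv (ptransl (1:R)) (cb * t))
        = pinv (ptransl (1:R)) (cb * u2) from rfl,
      pinv_ptransl_some.mpr (one_mul (cb * u2))]
    simp

lemma bx_mem_XX (n : ℤ) : bx n ∈ XX := by
  rw [mem_XX_iff]
  constructor
  · refine ⟨qR (FreeMonoid.ofList [Gen.x n]), nf_injective ?_⟩
    rw [nf_mul, hab, Psi_ofList, show nf (qR (FreeMonoid.ofList [Gen.x n])) = [Gen.x n]
      from Psi_ofList _ [], nf_bx]
    rfl
  · refine ⟨qR (FreeMonoid.ofList [Gen.x (n-1)]), nf_injective ?_⟩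
    rw [nf_mul, hcb, Psi_ofList, show nf (qR (FreeMonoid.ofList [Gen.x (n-1)])) = [Gen.x (n-1)]
      from Psi_ofList _ [], nf_bx]
    show actC (Gen.b :: Gen.x (n-1) :: []) = _
    rw [show actC (Gen.b :: Gen.x (n-1) :: []) = [Gen.b, Gen.x (n-1+1)] from rfl]
    norm_num

lemma actC_no_a (W u : List Gen) (h : actC W = u) (hu : u.head? = some Gen.a) : False := by
  rcases actC_inv W _ h with ⟨hu', -, -⟩ | ⟨k, v', hw, hu'⟩ | ⟨k, v', hw, hu'⟩ <;> simp_all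

lemma XX_fix (st : R) (hst : st ∈ XX) :
    gen Gen.a * st = st ∨ gen Gen.c * st = st := by
  obtain ⟨⟨u1, hu1⟩, ⟨u2, hu2⟩⟩ := (mem_XX_iff st).mp hst
  have hnfs : nf st = actA (Gen.b :: nf u1) := by
    rw [← hu1, nf_mul, hab, Psi_ofList]; rfl
  have hnfs2 : nf st = actC (Gen.b :: nf u2) := by
    rw [← hu2, nf_mul, hcb, Psi_ofList]; rfl
  rcases hv : nf u1 with _ | ⟨g1, v⟩
  · exfalso
    rw [hv] at hnfs
    exact actC_no_a _ _ hnfs2.symm (by rw [hnfs]; rfl)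
  cases g1
  case x k =>
    left
    apply nf_injective
    rw [nf_mul, Psi_gen, hnfs, hv]
    rfl
  case y k =>
    right
    apply nf_injective
    rw [nf_mul, Psi_gen, hnfs, hv]
    rfl
  all_goals
    (exfalso
     rw [hv] at hnfs
     exact actC_no_a _ _ hnfs2.symm (by rw [hnfs]; rfl))

lemma hull_ptransl (r : R) : InInvHull (ptransl r) := by
  refine ⟨[(r, (1:R))], by simp, ?_⟩
  funext st
  show ptransl r st = pblock (r, (1:R)) st
  rw [pblock_apply, pinv_ptransl_some.mpr (one_mul (r * st))]
  rfl

lemma c_bx (n : ℤ) : gen Gen.c * bx n = bx (n+1) := by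
  apply nf_injective
  rw [nf_mul, Psi_gen, nf_bx, nf_bx]
  rfl

lemma a_bY (m : ℤ) : gen Gen.a * bY m = bY (m+1) := by
  apply nf_injective
  rw [nf_mul, Psi_gen, nf_bY, nf_bY]
  rfl

lemma bx_ne (n : ℤ) : bx (n+1) ≠ bx n := fun h => by
  have := congrArg nf h
  rw [nf_bx, nf_bx] at this
  simp at this

lemma bY_ne (m : ℤ) : bY (m+1) ≠ bY m := fun h => by
  have := congrArg nf h
  rw [nf_bY, nf_bY] at this
  simp at this

noncomputable def hvec : Fin 2 → (R → Option R) := ![ptransl (gen Gen.a), ptransl (gen Gen.c)]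

lemma hvec_hull : ∀ k : Fin 2, InInvHull (hvec k) := by
  intro k
  fin_cases k
  · simpa [hvec] using hull_ptransl (gen Gen.a)
  · simpa [hvec] using hull_ptransl (gen Gen.c)

lemma XX_sub : XX ⊆ ⋃ k : Fin 2, {st : R | hvec k st = some st} := by
  intro st hst
  rcases XX_fix st hst with h | h
  · exact Set.mem_iUnion.mpr ⟨0, by simpa [hvec, ptransl] using h⟩
  · exact Set.mem_iUnion.mpr ⟨1, by simpa [hvec, ptransl] using h⟩

lemma main : ¬ Regular R := by
  intro hreg
  obtain ⟨l, Y, kk, hYbar, hcov, hfix⟩ :=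
    hreg 2 hvec hvec_hull XX XX_bar ⟨bx 0, bx_mem_XX 0⟩ XX_sub
  have hchoice : ∀ n : ℤ, ∃ j : Fin l, bx n ∈ Y j :=
    fun n => Set.mem_iUnion.mp (hcov (bx_mem_XX n))
  choose F hF using hchoice
  obtain ⟨j, hj⟩ := Finite.exists_infinite_fiber F
  have hS0 : {n : ℤ | bx n ∈ Y j}.Infinite := by
    refine (Set.infinite_coe_iff.mp hj).mono fun n hn => ?_
    have hn' : F n = j := hn
    rw [← hn']
    exact hF n
  have hkk : kk j = 0 ∨ kk j = 1 := by
    obtain ⟨v, hv⟩ := kk j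
    interval_cases v
    · exact Or.inl rfl
    · exact Or.inr rfl
  rcases hkk with h0' | h1'
  · -- fixed by left multiplication by a
    have hfixa : ∀ st ∈ Y j, gen Gen.a * st = st := by
      intro st hs
      have hh := hfix j st hs
      rw [h0'] at hh
      have : ptransl (gen Gen.a) st = some st := by
        rw [show hvec 0 = ptransl (gen Gen.a) by simp [hvec]] at hh
        exact hh
      exact Option.some_injective _ this
    obtain ⟨Z0, m, Zi, hZ0c, hZic, hYeq⟩ := hYbar j
    have hZ0inf : {n : ℤ | bx n ∈ Z0}.Infinite :=
      hS0.mono fun n hn => by rw [hYeq] at hn; exact hn.1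
    rcases crux hZ0c with ⟨hf1, -⟩ | ⟨-, hf2⟩
    · exact hZ0inf hf1
    have hbYnot : ∀ m' : ℤ, bY m' ∉ Y j := by
      intro m' hm'
      have := hfixa _ hm'
      rw [a_bY] at this
      exact bY_ne m' this
    have hZ0yinf : {m' : ℤ | bY m' ∈ Z0}.Infinite := by
      have h3 := Set.Finite.infinite_compl hf2
      have h4 : {m' : ℤ | bY m' ∉ Z0}ᶜ = {m' : ℤ | bY m' ∈ Z0} := by
        ext m'; simp
      rwa [h4] at h3
    have hcov2 : {m' : ℤ | bY m' ∈ Z0} ⊆ ⋃ i : Fin m, {m' : ℤ | bY m' ∈ Zi i} := by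
      intro m' hm'
      have hmem : bY m' ∈ ⋃ i, Zi i := by
        by_contra hni
        exact hbYnot m' (by rw [hYeq]; exact ⟨hm', hni⟩)
      obtain ⟨i, hi⟩ := Set.mem_iUnion.mp hmem
      exact Set.mem_iUnion.mpr ⟨i, hi⟩
    have hiex : ∃ i : Fin m, {m' : ℤ | bY m' ∈ Zi i}.Infinite := by
      by_contra hall
      push_neg at hall
      exact (hZ0yinf.mono hcov2) (Set.finite_iUnion hall)
    obtain ⟨i, hiinf⟩ := hiex
    rcases crux (hZic i) with ⟨-, hfy⟩ | ⟨hfx, -⟩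
    · exact hiinf hfy
    · refine hS0 (hfx.subset fun n hn => ?_)
      have hn' : bx n ∈ Y j := hn
      rw [hYeq] at hn'
      exact fun hmem => hn'.2 (Set.mem_iUnion.mpr ⟨i, hmem⟩)
  · -- fixed by left multiplication by c : impossible on bx points
    obtain ⟨n, hn⟩ := hS0.nonempty
    have hh := hfix j (bx n) hn
    rw [h1'] at hh
    have : ptransl (gen Gen.c) (bx n) = some (bx n) := by
      rw [show hvec 1 = ptransl (gen Gen.c) by simp [hvec]] at hh
      exact hh
    have h2 : gen Gen.c * bx n = bx n := Option.some_injective _ this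
    rw [c_bx] at h2
    exact bx_ne n h2

end Aux

/-- The monoid `R` is not C*-regular. -/
theorem cstar_stmt15 : ¬ Regular R := Aux.main

end SgC
end
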